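/- arXiv:1703.02230 — 2 statements merged into one kernel-verified Lean document; each statement's English description precedes it below -/
import Mathlib

section
/- Let D be a digraph with no subdivision of B(k,1;k), and let C_1, C_2, C_3 be directed cycles in D, each of length at least 8k, pairwise intersecting, such that any two of them intersect in a directed subpath with at most k vertices. Let v be a vertex in V(C_2) ∩ V(C_3) but not in V(C_1), let t_{1,2} (resp. t_{1,3}) be the terminal vertex of the intersection path of C_1 and C_2 (resp. C_1 and C_3), and s_{1,2}, s_{1,3} the initial vertices of these intersection paths. Then exactly one of the following holds: (i) the subpaths C_2[t_{1,2}, v] and C_3[t_{1,3}, v] both have length less than 3k; (ii) the subpaths C_2[v, s_{1,2}] and C_3[v, s_{1,3}] both have length less than 3k. -/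
universe u

section Defs
variable {V : Type u}

/-- `l` is a directed path from `x` to `y` in the digraph with arc relation `A`. -/
def DiPath (A : V → V → Prop) (x y : V) (l : List V) : Prop :=
  l.Chain' A ∧ l.Nodup ∧ l.head? = some x ∧ l.getLast? = some y

/-- The internal vertices of a path given as a list. -/
def internals (l : List V) : List V := l.tail.dropLast

/-- `(a,b)` is an arc of the directed cycle represented by the list `l`. -/
def cycArc (l : List V) (a b : V) : Prop :=
  (a, b) ∈ l.zip l.tail ∨ (l.getLast? = some a ∧ l.head? = some b)

/-- `l` represents a directed cycle of the digraph with arc relation `A`;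
its length (number of arcs = number of vertices) is `l.length`. -/
def DiCycle (A : V → V → Prop) (l : List V) : Prop :=
  l ≠ [] ∧ l.Chain' A ∧ l.Nodup ∧
    ∀ a b, l.getLast? = some a → l.head? = some b → A a b

/-- A digraph is strongly connected. -/
def StrongConn (A : V → V → Prop) : Prop := ∀ x y : V, ∃ l, DiPath A x y l

/-- The chromatic number of a digraph: that of its underlying undirected graph. -/
noncomputable def dchrom (A : V → V → Prop) : ℕ∞ :=
  (SimpleGraph.fromRel A).chromaticNumber

/-- Two paths are internally disjoint. -/
def IntDisj (P Q : List V) : Prop :=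
  (∀ v ∈ internals P, v ∉ internals Q) ∧ (∀ v ∈ internals Q, v ∉ internals P)

/-- `D` contains a subdivision of the bispindle `B(k1,k2;k3)`: vertices `x`, `y`
and three pairwise internally disjoint dipaths, two from `x` to `y` of lengths
at least `k1` and `k2`, and one from `y` to `x` of length at least `k3`. -/
def SubdivB (A : V → V → Prop) (k1 k2 k3 : ℕ) : Prop :=
  ∃ (x y : V) (P1 P2 P3 : List V),
    DiPath A x y P1 ∧ DiPath A x y P2 ∧ DiPath A y x P3 ∧
    k1 + 1 ≤ P1.length ∧ k2 + 1 ≤ P2.length ∧ k3 + 1 ≤ P3.length ∧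
    P1 ≠ P2 ∧ IntDisj P1 P2 ∧ IntDisj P1 P3 ∧ IntDisj P2 P3

/-- The length of the subpath of the cycle `l` from `a` to `b` (number of arcs). -/
def cycDist [DecidableEq V] (l : List V) (a b : V) : ℕ :=
  (l.rotate (l.idxOf a)).idxOf b

/-- The subpath (vertex list) of the cycle `l` from `a` to `b`. -/
def cycSub [DecidableEq V] (l : List V) (a b : V) : List V :=
  (l.rotate (l.idxOf a)).take (cycDist l a b + 1)

/-- The intersection of the cycles `Ci` and `Cj` is the common directed subpath
from `a` to `b`, having at most `k` vertices. -/
def InterPath [DecidableEq V] (k : ℕ) (Ci Cj : List V) (a b : V) : Prop :=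
  a ∈ Ci ∧ b ∈ Cj ∧ (∀ x, (x ∈ Ci ∧ x ∈ Cj) ↔ x ∈ cycSub Ci a b) ∧
  cycSub Ci a b = cycSub Cj a b ∧ (cycSub Ci a b).length ≤ k

/-- A `k`-suitable collection of directed cycles: all cycles have length at least `8k`
and any two distinct cycles intersect on a directed subpath of at most `k` vertices. -/
def Suitable [DecidableEq V] (A : V → V → Prop) (k : ℕ) (𝒞 : Set (List V)) : Prop :=
  (∀ C ∈ 𝒞, DiCycle A C ∧ 8 * k ≤ C.length) ∧
  ∀ C ∈ 𝒞, ∀ C' ∈ 𝒞, C ≠ C' → (∃ x, x ∈ C ∧ x ∈ C') → ∃ a b, InterPath k C C' a b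

/-- Adjacency in the intersection graph of a collection of cycles. -/
def interRel (𝒞 : Set (List V)) : List V → List V → Prop :=
  fun C C' => C ∈ 𝒞 ∧ C' ∈ 𝒞 ∧ ∃ x, x ∈ C ∧ x ∈ C'

/-- `(a,b)` is an arc of the union of the cycles of `𝒞`. -/
def unionArc (𝒞 : Set (List V)) (a b : V) : Prop := ∃ C ∈ 𝒞, cycArc C a b

/-- A graph is 2-connected. -/
def TwoConnectedG {W : Type*} (G : SimpleGraph W) : Prop :=
  G.Connected ∧ ∀ w : W, (G.induce {u | u ≠ w}).Connected

end Defs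

section Infra
variable {V : Type u} [DecidableEq V] {A : V → V → Prop}

open List

lemma mem_take_iff_indexOf_lt {x : V} :
    ∀ {L : List V} {m : ℕ}, x ∈ L.take m ↔ L.idxOf x < m ∧ x ∈ L := by
  intro L
  induction L with
  | nil => intro m; simp
  | cons c t ih =>
    intro m
    cases m with
    | zero => simp
    | succ m =>
      by_cases hx : x = c
      · subst hx; simp [List.idxOf_cons_self]
      · rw [List.take_succ_cons]
        simp only [List.mem_cons, hx, false_or,
          List.idxOf_cons_ne _ (fun h => hx h.symm)]
        rw [ih]
        constructor
        · rintro ⟨h1, h2⟩; exact ⟨by omega, h2⟩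
        · rintro ⟨h1, h2⟩; exact ⟨by omega, h2⟩

lemma indexOf_take_eq {x : V} {L : List V} {m : ℕ} (h : x ∈ L.take m) :
    (L.take m).idxOf x = L.idxOf x := by
  induction L generalizing m with
  | nil => simp at h
  | cons c t ih =>
    cases m with
    | zero => simp at h
    | succ m =>
      by_cases hx : x = c
      · subst hx; simp [List.idxOf_cons_self]
      · rw [List.take_succ_cons] at h ⊢
        rcases List.mem_cons.1 h with h' | h'
        · exact absurd h' hx
        · rw [List.idxOf_cons_ne _ (fun h => hx h.symm),
            List.idxOf_cons_ne _ (fun h => hx h.symm), ih h']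

variable {l : List V} {a b c x y : V}

lemma cycDist_eq (hnd : l.Nodup) (ha : a ∈ l) (hb : b ∈ l) :
    cycDist l a b = (l.idxOf b + l.length - l.idxOf a) % l.length := by
  have hn : 0 < l.length := List.length_pos_iff.2 (List.ne_nil_of_mem ha)
  have hA : l.idxOf a < l.length := List.idxOf_lt_length_iff.2 ha
  have hB : l.idxOf b < l.length := List.idxOf_lt_length_iff.2 hb
  set i := (l.idxOf b + l.length - l.idxOf a) % l.length with hi
  have hilt : i < (l.rotate (l.idxOf a)).length := by
    rw [List.length_rotate]; exact Nat.mod_lt _ hn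
  have hget : (l.rotate (l.idxOf a))[i]'hilt = b := by
    rw [List.getElem_rotate]
    have : (i + l.idxOf a) % l.length = l.idxOf b := by
      rw [hi, Nat.mod_add_mod]
      have h1 : l.idxOf b + l.length - l.idxOf a + l.idxOf a
          = l.idxOf b + l.length := by omega
      rw [h1, Nat.add_mod_right, Nat.mod_eq_of_lt hB]
    simp_rw [this]
    exact List.getElem_idxOf hB
  have hndr : (l.rotate (l.idxOf a)).Nodup := List.nodup_rotate.2 hnd
  have := List.Nodup.idxOf_getElem hndr i hilt
  rw [hget] at this
  exact this

lemma cycDist_formula (hnd : l.Nodup) (ha : a ∈ l) (hb : b ∈ l) :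
    cycDist l a b = if l.idxOf a ≤ l.idxOf b then l.idxOf b - l.idxOf a
      else l.idxOf b + l.length - l.idxOf a := by
  have hn : 0 < l.length := List.length_pos_iff.2 (List.ne_nil_of_mem ha)
  have hA : l.idxOf a < l.length := List.idxOf_lt_length_iff.2 ha
  have hB : l.idxOf b < l.length := List.idxOf_lt_length_iff.2 hb
  rw [cycDist_eq hnd ha hb]
  rcases le_or_gt (l.idxOf a) (l.idxOf b) with h | h
  · rw [if_pos h]
    have h1 : l.idxOf b + l.length - l.idxOf a
        = (l.idxOf b - l.idxOf a) + l.length := by omega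
    rw [h1, Nat.add_mod_right, Nat.mod_eq_of_lt (by omega)]
  · rw [if_neg (not_le.2 h), Nat.mod_eq_of_lt (by omega)]

lemma cycDist_lt (hnd : l.Nodup) (ha : a ∈ l) (hb : b ∈ l) :
    cycDist l a b < l.length := by
  have hA : l.idxOf a < l.length := List.idxOf_lt_length_iff.2 ha
  have hB : l.idxOf b < l.length := List.idxOf_lt_length_iff.2 hb
  rw [cycDist_formula hnd ha hb]; split <;> omega

lemma cycDist_lt_iff_mem (ha : a ∈ l) :
    cycDist l a b < l.length ↔ b ∈ l := by
  unfold cycDist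
  rw [← List.length_rotate l (l.idxOf a), List.idxOf_lt_length_iff, List.mem_rotate]

lemma cycDist_self (hnd : l.Nodup) (ha : a ∈ l) : cycDist l a a = 0 := by
  unfold cycDist
  have h0 : 0 < (l.rotate (l.idxOf a)).length := by
    rw [List.length_rotate]; exact List.length_pos_iff.2 (List.ne_nil_of_mem ha)
  have : (l.rotate (l.idxOf a))[0]'h0 = a := by
    rw [List.getElem_rotate]
    simp only [Nat.zero_add, Nat.mod_eq_of_lt (List.idxOf_lt_length_iff.2 ha)]
    exact List.getElem_idxOf (List.idxOf_lt_length_iff.2 ha)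
  have hndr : (l.rotate (l.idxOf a)).Nodup := List.nodup_rotate.2 hnd
  have h2 := List.Nodup.idxOf_getElem hndr 0 h0
  rw [this] at h2
  exact h2
  
lemma cycDist_eq_zero_iff (hnd : l.Nodup) (ha : a ∈ l) (hb : b ∈ l) :
    cycDist l a b = 0 ↔ a = b := by
  have hA : l.idxOf a < l.length := List.idxOf_lt_length_iff.2 ha
  have hB : l.idxOf b < l.length := List.idxOf_lt_length_iff.2 hb
  rw [cycDist_formula hnd ha hb]
  constructor
  · intro h
    have : l.idxOf a = l.idxOf b := by split at h <;> omega
    exact (List.idxOf_inj ha).1 this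
  · rintro rfl; simp

lemma cycDist_pos (hnd : l.Nodup) (ha : a ∈ l) (hb : b ∈ l) (hne : a ≠ b) :
    0 < cycDist l a b := by
  rcases Nat.eq_zero_or_pos (cycDist l a b) with h | h
  · exact absurd ((cycDist_eq_zero_iff hnd ha hb).1 h) hne
  · exact h

lemma cycDist_compl (hnd : l.Nodup) (ha : a ∈ l) (hb : b ∈ l) (hne : a ≠ b) :
    cycDist l a b + cycDist l b a = l.length := by
  have hA : l.idxOf a < l.length := List.idxOf_lt_length_iff.2 ha
  have hB : l.idxOf b < l.length := List.idxOf_lt_length_iff.2 hb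
  have hAB : l.idxOf a ≠ l.idxOf b := fun h => hne ((List.idxOf_inj ha).1 h)
  rw [cycDist_formula hnd ha hb, cycDist_formula hnd hb ha]
  split <;> split <;> omega

lemma cycDist_tri (hnd : l.Nodup) (ha : a ∈ l) (hb : b ∈ l) (hc : c ∈ l) :
    cycDist l a b + cycDist l b c = cycDist l a c ∨
    cycDist l a b + cycDist l b c = cycDist l a c + l.length := by
  have hA : l.idxOf a < l.length := List.idxOf_lt_length_iff.2 ha
  have hB : l.idxOf b < l.length := List.idxOf_lt_length_iff.2 hb
  have hC : l.idxOf c < l.length := List.idxOf_lt_length_iff.2 hc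
  rw [cycDist_formula hnd ha hb, cycDist_formula hnd hb hc, cycDist_formula hnd ha hc]
  split <;> split <;> split <;> omega

/-- if x is on the arc from a to y, then distances add up. -/
lemma cycDist_sub (hnd : l.Nodup) (ha : a ∈ l) (hx : x ∈ l) (hy : y ∈ l)
    (h : cycDist l a x ≤ cycDist l a y) :
    cycDist l x y = cycDist l a y - cycDist l a x := by
  have hA : l.idxOf a < l.length := List.idxOf_lt_length_iff.2 ha
  have hX : l.idxOf x < l.length := List.idxOf_lt_length_iff.2 hx
  have hY : l.idxOf y < l.length := List.idxOf_lt_length_iff.2 hy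
  rw [cycDist_formula hnd ha hx, cycDist_formula hnd ha hy] at h ⊢
  rw [cycDist_formula hnd hx hy]
  revert h
  split <;> split <;> split <;> omega

lemma mem_cycSub_iff : x ∈ cycSub l a b ↔ x ∈ l ∧ cycDist l a x ≤ cycDist l a b := by
  unfold cycSub
  rw [mem_take_iff_indexOf_lt]
  unfold cycDist
  rw [List.mem_rotate]
  constructor
  · rintro ⟨h1, h2⟩; exact ⟨h2, by omega⟩
  · rintro ⟨h1, h2⟩; exact ⟨by omega, h1⟩

lemma cycSub_subset (h : x ∈ cycSub l a b) : x ∈ l := (mem_cycSub_iff.1 h).1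

lemma self_mem_cycSub (hnd : l.Nodup) (ha : a ∈ l) : a ∈ cycSub l a b :=
  mem_cycSub_iff.2 ⟨ha, by rw [cycDist_self hnd ha]; exact Nat.zero_le _⟩

lemma length_cycSub (hnd : l.Nodup) (ha : a ∈ l) (hb : b ∈ l) :
    (cycSub l a b).length = cycDist l a b + 1 := by
  unfold cycSub
  rw [List.length_take, List.length_rotate]
  have := cycDist_lt hnd ha hb
  omega

lemma length_cycSub_min : (cycSub l a b).length = min (cycDist l a b + 1) l.length := by
  unfold cycSub
  rw [List.length_take, List.length_rotate]

lemma head?_cycSub (ha : a ∈ l) : (cycSub l a b).head? = some a := by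
  have hn : 0 < l.length := List.length_pos_iff.2 (List.ne_nil_of_mem ha)
  have h0 : 0 < (l.rotate (l.idxOf a)).length := by rw [List.length_rotate]; exact hn
  have hget : (l.rotate (l.idxOf a))[0]'h0 = a := by
    rw [List.getElem_rotate]
    simp only [Nat.zero_add, Nat.mod_eq_of_lt (List.idxOf_lt_length_iff.2 ha)]
    exact List.getElem_idxOf (List.idxOf_lt_length_iff.2 ha)
  unfold cycSub
  rw [List.head?_eq_getElem?]
  rw [List.getElem?_take_of_lt (by omega)]
  rw [List.getElem?_eq_getElem h0, hget]

lemma getLast?_cycSub (hnd : l.Nodup) (ha : a ∈ l) (hb : b ∈ l) :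
    (cycSub l a b).getLast? = some b := by
  have hn : 0 < l.length := List.length_pos_iff.2 (List.ne_nil_of_mem ha)
  have hd := cycDist_lt hnd ha hb
  have hlen : (cycSub l a b).length = cycDist l a b + 1 := length_cycSub hnd ha hb
  have hdl : cycDist l a b < (l.rotate (l.idxOf a)).length := by
    rw [List.length_rotate]; exact hd
  have hget : (l.rotate (l.idxOf a))[cycDist l a b]'hdl = b := by
    unfold cycDist
    exact List.getElem_idxOf (by rw [List.length_rotate] at hdl ⊢; exact hdl)
  rw [List.getLast?_eq_getElem?, hlen]
  simp only [Nat.add_sub_cancel]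
  unfold cycSub
  rw [List.getElem?_take_of_lt (by omega)]
  rw [List.getElem?_eq_getElem hdl, hget]

lemma nodup_cycSub (hnd : l.Nodup) : (cycSub l a b).Nodup :=
  (List.take_sublist _ _).nodup (List.nodup_rotate.2 hnd)

lemma chain'_rotate (hC : DiCycle A l) (m : ℕ) : (l.rotate m).Chain' A := by
  obtain ⟨hne, hch, hnd, hwrap⟩ := hC
  have hll : (l ++ l).Chain' A := by
    refine List.isChain_append.2 ?_
    refine ⟨hch, hch, ?_⟩
    intro p hp q hq
    exact hwrap p q hp hq
  have hinfix : l.rotate m <:+: l ++ l := by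
    rw [List.rotate_eq_drop_append_take_mod]
    refine ⟨l.take (m % l.length), l.drop (m % l.length), ?_⟩
    conv_rhs => rw [← List.take_append_drop (m % l.length) l]
    simp only [List.append_assoc]
  exact hll.infix hinfix

lemma chain'_cycSub (hC : DiCycle A l) : (cycSub l a b).Chain' A :=
  (chain'_rotate hC _).take _

lemma diPath_cycSub (hC : DiCycle A l) (ha : a ∈ l) (hb : b ∈ l) :
    DiPath A a b (cycSub l a b) :=
  ⟨chain'_cycSub hC, nodup_cycSub hC.2.2.1, head?_cycSub ha, getLast?_cycSub hC.2.2.1 ha hb⟩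

lemma indexOf_cycSub (h : x ∈ cycSub l a b) :
    (cycSub l a b).idxOf x = cycDist l a x := by
  unfold cycSub at h ⊢
  rw [indexOf_take_eq h]
  rfl

lemma diPath_ne_nil {p : List V} (hp : DiPath A x y p) : p ≠ [] := by
  intro h; rw [h] at hp; exact absurd hp.2.2.1 (by simp)

lemma diPath_head_mem {p : List V} (hp : DiPath A x y p) : x ∈ p := by
  have := hp.2.2.1
  cases p with
  | nil => exact absurd this (by simp)
  | cons c t => rw [List.head?_cons, Option.some_inj] at this; rw [this]; exact List.mem_cons_self

lemma diPath_last_mem {p : List V} (hp : DiPath A x y p) : y ∈ p := by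
  have h := hp.2.2.2
  have h5 : p ≠ [] := diPath_ne_nil hp
  obtain ⟨h', rfl⟩ := List.mem_getLast?_eq_getLast (by rw [h]; rfl)
  exact List.getLast_mem h'

lemma diPath_append {p q : List V} {x y z : V} (hp : DiPath A x y p) (hq : DiPath A y z q)
    (hint : ∀ w, w ∈ p → w ∈ q → w = y) : DiPath A x z (p ++ q.tail) := by
  obtain ⟨hpc, hpn, hph, hpl⟩ := hp
  obtain ⟨hqc, hqn, hqh, hql⟩ := hq
  obtain ⟨t, rfl⟩ : ∃ t, q = y :: t := by
    cases q with
    | nil => exact absurd hqh (by simp)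
    | cons c t => rw [List.head?_cons, Option.some_inj] at hqh; exact ⟨t, by rw [hqh]⟩
  simp only [List.tail_cons]
  have hynt : y ∉ t := (List.nodup_cons.1 hqn).1
  refine ⟨?_, ?_, ?_, ?_⟩
  · refine List.isChain_append.2 ?_
    refine ⟨hpc, hqc.tail, ?_⟩
    intro u hu w hw
    have hu' : u = y := by
      rw [hpl, Option.mem_some_iff] at hu; exact hu.symm
    subst hu'
    exact hqc.rel_head? hw
  · rw [List.nodup_append]
    refine ⟨hpn, (List.nodup_cons.1 hqn).2, ?_⟩
    intro u hu u' hut heq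
    subst heq
    have := hint u hu (List.mem_cons_of_mem _ hut)
    subst this
    exact hynt hut
  · rw [List.head?_append_of_ne_nil _ (diPath_ne_nil ⟨hpc, hpn, hph, hpl⟩)]
    exact hph
  · cases t with
    | nil =>
      have hyz : y = z := by simpa using hql
      subst hyz
      simpa using hpl
    | cons c t' =>
      rw [List.getLast?_append_of_ne_nil _ (by simp)]
      simpa using hql

lemma mem_diPath_append {p q : List V} {w : V} (h : w ∈ p ++ q.tail) :
    w ∈ p ∨ w ∈ q := by
  rcases List.mem_append.1 h with h | h
  · exact Or.inl h
  · exact Or.inr (List.mem_of_mem_tail h)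

lemma internals_subset {p : List V} (h : x ∈ internals p) : x ∈ p :=
  List.mem_of_mem_tail (List.dropLast_subset _ h)

lemma head_not_mem_internals {p : List V} (hp : DiPath A x y p) : x ∉ internals p := by
  intro h
  obtain ⟨c0, t0, rfl⟩ : ∃ c0 t0, p = c0 :: t0 := by
    cases p with
    | nil => exact absurd hp.2.2.1 (by simp)
    | cons c0 t0 => exact ⟨c0, t0, rfl⟩
  have hc : c0 = x := by
    have := hp.2.2.1; rw [List.head?_cons, Option.some_inj] at this; exact this
  unfold internals at h
  simp only [List.tail_cons] at h
  rw [← hc] at h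
  exact (List.nodup_cons.1 hp.2.1).1 (List.mem_of_mem_dropLast h)

lemma last_not_mem_internals {p : List V} (hp : DiPath A x y p) : y ∉ internals p := by
  intro h
  unfold internals at h
  have h1 : y ∈ p.tail.dropLast := h
  have h2 : p.tail.dropLast.Sublist p.dropLast := by
    cases p with
    | nil => simp
    | cons c t =>
      cases t using List.reverseRecOn with
      | nil => simp
      | append_singleton t' e =>
        simp only [List.tail_cons]
        rw [List.dropLast_concat, ← List.cons_append, List.dropLast_concat]
        exact (List.sublist_cons_self c t').trans (List.Sublist.refl _)
  have h3 : y ∈ p.dropLast := h2.mem h1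
  have h4 : p.getLast? = some y := hp.2.2.2
  have h5 : p ≠ [] := diPath_ne_nil hp
  have h6 : p.getLast h5 = y := by
    have h7 := List.getLast?_eq_getLast_of_ne_nil h5
    rw [h7, Option.some_inj] at h4
    exact h4
  have h8 : p.dropLast ++ [p.getLast h5] = p := List.dropLast_append_getLast h5
  have h9 := hp.2.1
  rw [← h8, List.nodup_append] at h9
  exact h9.2.2 y h3 (p.getLast h5) (by simp) h6.symm

lemma intDisj_of_subset {p q : List V} (hp : DiPath A x y p)
    (h : ∀ w, w ∈ p → w ∈ q → w = x ∨ w = y) : IntDisj p q := by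
  constructor
  · intro w hw hw'
    rcases h w (internals_subset hw) (internals_subset hw') with rfl | rfl
    · exact head_not_mem_internals hp hw
    · exact last_not_mem_internals hp hw
  · intro w hw hw'
    rcases h w (internals_subset hw') (internals_subset hw) with rfl | rfl
    · exact head_not_mem_internals hp hw'
    · exact last_not_mem_internals hp hw'

end Infra

section Inter
variable {V : Type u} [DecidableEq V] {A : V → V → Prop}

lemma interPath_facts {k : ℕ} {Ci Cj : List V} {a b : V}
    (hk : 1 ≤ k) (hndi : Ci.Nodup) (hndj : Cj.Nodup)
    (h8i : 8 * k ≤ Ci.length) (h8j : 8 * k ≤ Cj.length)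
    (hIP : InterPath k Ci Cj a b) :
    a ∈ Ci ∧ a ∈ Cj ∧ b ∈ Ci ∧ b ∈ Cj ∧
      cycDist Ci a b + 1 ≤ k ∧ cycDist Cj a b = cycDist Ci a b := by
  obtain ⟨hai, hbj, hiff, heq, hlen⟩ := hIP
  have hmin : min (cycDist Ci a b + 1) Ci.length ≤ k := by
    rw [← length_cycSub_min]; exact hlen
  have hdik : cycDist Ci a b + 1 ≤ k := by omega
  have hbi : b ∈ Ci := (cycDist_lt_iff_mem hai).1 (by omega)
  have haj : a ∈ Cj := ((hiff a).2 (self_mem_cycSub hndi hai)).2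
  have hlenj : (cycSub Cj a b).length ≤ k := by rw [← heq]; exact hlen
  have hminj : min (cycDist Cj a b + 1) Cj.length ≤ k := by
    rw [← length_cycSub_min]; exact hlenj
  have hdjk : cycDist Cj a b + 1 ≤ k := by omega
  have hlij : (cycSub Ci a b).length = (cycSub Cj a b).length := by rw [heq]
  rw [length_cycSub hndi hai hbi, length_cycSub hndj haj hbj] at hlij
  exact ⟨hai, haj, hbi, hbj, hdik, by omega⟩

lemma interPath_symm {k : ℕ} {Ci Cj : List V} {a b : V}
    (hk : 1 ≤ k) (hndi : Ci.Nodup) (hndj : Cj.Nodup)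
    (h8i : 8 * k ≤ Ci.length) (h8j : 8 * k ≤ Cj.length)
    (hIP : InterPath k Ci Cj a b) : InterPath k Cj Ci a b := by
  obtain ⟨hai, haj, hbi, hbj, hdik, hdeq⟩ :=
    interPath_facts hk hndi hndj h8i h8j hIP
  obtain ⟨_, _, hiff, heq, hlen⟩ := hIP
  refine ⟨haj, hbi, ?_, heq.symm, by rw [← heq]; exact hlen⟩
  intro x
  rw [← heq, and_comm]
  exact hiff x

end Inter

section Main
variable {V : Type u} [DecidableEq V] {A : V → V → Prop}

lemma mainB {k : ℕ} (hk : 1 ≤ k) {A : V → V → Prop}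
    {C1 C2 C3 : List V} {s12 t12 s13 t13 s23 t23 v : V}
    (h1 : DiCycle A C1 ∧ 8 * k ≤ C1.length)
    (h2 : DiCycle A C2 ∧ 8 * k ≤ C2.length)
    (h3 : DiCycle A C3 ∧ 8 * k ≤ C3.length)
    (hi12 : InterPath k C1 C2 s12 t12)
    (hi13 : InterPath k C1 C3 s13 t13)
    (hi23 : InterPath k C2 C3 s23 t23)
    (hv2 : v ∈ C2) (hv3 : v ∈ C3) (hv1 : v ∉ C1)
    (ha2 : 3 * k ≤ cycDist C2 t12 v) (hb3 : 3 * k ≤ cycDist C3 v s13) :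
    SubdivB A k 1 k := by
  obtain ⟨hC1, h81⟩ := h1
  obtain ⟨hC2, h82⟩ := h2
  obtain ⟨hC3, h83⟩ := h3
  have nd1 : C1.Nodup := hC1.2.2.1
  have nd2 : C2.Nodup := hC2.2.2.1
  have nd3 : C3.Nodup := hC3.2.2.1
  obtain ⟨hs12C1, hs12C2, ht12C1, ht12C2, hd12k, hd12eq⟩ :=
    interPath_facts hk nd1 nd2 h81 h82 hi12
  obtain ⟨hs13C1, hs13C3, ht13C1, ht13C3, hd13k, hd13eq⟩ :=
    interPath_facts hk nd1 nd3 h81 h83 hi13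
  obtain ⟨hs23C2, hs23C3, ht23C2, ht23C3, hd23k, hd23eq⟩ :=
    interPath_facts hk nd2 nd3 h82 h83 hi23
  have iff12 := hi12.2.2.1
  have heq12 := hi12.2.2.2.1
  have iff13 := hi13.2.2.1
  have heq13 := hi13.2.2.2.1
  have iff23 := hi23.2.2.1
  have heq23 := hi23.2.2.2.1
  -- membership characterizations
  have mem12 : ∀ x, (x ∈ C1 ∧ x ∈ C2) ↔
      (x ∈ C2 ∧ cycDist C2 s12 x ≤ cycDist C2 s12 t12) := by
    intro x; rw [iff12 x, heq12, mem_cycSub_iff]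
  have mem12' : ∀ x, (x ∈ C1 ∧ x ∈ C2) ↔
      (x ∈ C1 ∧ cycDist C1 s12 x ≤ cycDist C1 s12 t12) := by
    intro x; rw [iff12 x, mem_cycSub_iff]
  have mem13 : ∀ x, (x ∈ C1 ∧ x ∈ C3) ↔
      (x ∈ C3 ∧ cycDist C3 s13 x ≤ cycDist C3 s13 t13) := by
    intro x; rw [iff13 x, heq13, mem_cycSub_iff]
  have mem13' : ∀ x, (x ∈ C1 ∧ x ∈ C3) ↔
      (x ∈ C1 ∧ cycDist C1 s13 x ≤ cycDist C1 s13 t13) := by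
    intro x; rw [iff13 x, mem_cycSub_iff]
  have mem23 : ∀ x, (x ∈ C2 ∧ x ∈ C3) ↔
      (x ∈ C2 ∧ cycDist C2 s23 x ≤ cycDist C2 s23 t23) := by
    intro x; rw [iff23 x, mem_cycSub_iff]
  have mem23' : ∀ x, (x ∈ C2 ∧ x ∈ C3) ↔
      (x ∈ C3 ∧ cycDist C3 s23 x ≤ cycDist C3 s23 t23) := by
    intro x; rw [iff23 x, heq23, mem_cycSub_iff]
  -- sync of distances inside the block
  have hsync : ∀ u, u ∈ C2 → u ∈ C3 → cycDist C2 s23 u = cycDist C3 s23 u := by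
    intro u hu2 hu3
    have huB : u ∈ cycSub C2 s23 t23 := (iff23 u).1 ⟨hu2, hu3⟩
    have h1' := indexOf_cycSub huB
    have huB' : u ∈ cycSub C3 s23 t23 := by rw [← heq23]; exact huB
    have h2' := indexOf_cycSub huB'
    rw [← h1', ← h2', heq23]
  -- basic numeric abbreviation facts
  have hn2 : 8 * k ≤ C2.length := h82
  have hn3 : 8 * k ≤ C3.length := h83
  -- v is not on C1, hence beyond the P12 block on C2
  have hvnP12 : ¬ cycDist C2 s12 v ≤ cycDist C2 s12 t12 := by
    intro h
    exact hv1 (((mem12 v).2 ⟨hv2, h⟩).1)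
  have hvs12 : v ≠ s12 := fun h => hv1 (h ▸ hs12C1)
  have hvt12 : v ≠ t12 := fun h => hv1 (h ▸ ht12C1)
  have hvs13 : v ≠ s13 := fun h => hv1 (h ▸ hs13C1)
  have hvt13 : v ≠ t13 := fun h => hv1 (h ▸ ht13C1)
  have ha2v : cycDist C2 t12 v = cycDist C2 s12 v - cycDist C2 s12 t12 :=
    cycDist_sub nd2 hs12C2 ht12C2 hv2 (by omega)
  have hb2v : cycDist C2 v s12 + cycDist C2 s12 v = C2.length := by
    rw [Nat.add_comm]
    exact cycDist_compl nd2 hs12C2 hv2 (fun h => hvs12 h.symm)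
  have hs12vlt : cycDist C2 s12 v < C2.length := cycDist_lt nd2 hs12C2 hv2
  -- same on C3
  have hvnP13 : ¬ cycDist C3 s13 v ≤ cycDist C3 s13 t13 := by
    intro h
    exact hv1 (((mem13 v).2 ⟨hv3, h⟩).1)
  have ha3v : cycDist C3 t13 v = cycDist C3 s13 v - cycDist C3 s13 t13 :=
    cycDist_sub nd3 hs13C3 ht13C3 hv3 (by omega)
  have hb3v : cycDist C3 v s13 + cycDist C3 s13 v = C3.length := by
    rw [Nat.add_comm]
    exact cycDist_compl nd3 hs13C3 hv3 (fun h => hvs13 h.symm)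
  have hs13vlt : cycDist C3 s13 v < C3.length := cycDist_lt nd3 hs13C3 hv3
  have ha3pos : 0 < cycDist C3 t13 v :=
    cycDist_pos nd3 ht13C3 hv3 (fun h => hvt13 h.symm)
  -- block coordinates of v
  have hvB2 : cycDist C2 s23 v ≤ cycDist C2 s23 t23 := ((mem23 v).1 ⟨hv2, hv3⟩).2
  have hvB3 : cycDist C3 s23 v ≤ cycDist C3 s23 t23 := ((mem23' v).1 ⟨hv2, hv3⟩).2
  have hvsync : cycDist C2 s23 v = cycDist C3 s23 v := hsync v hv2 hv3
  -- CLAIM 1 : no vertex lies on all three cycles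
  have claim1 : ∀ u, u ∈ C1 → u ∈ C2 → u ∈ C3 → False := by
    intro u hu1 hu2 hu3
    have huv : u ≠ v := fun h => hv1 (h ▸ hu1)
    have hρ2 : cycDist C2 s23 u ≤ cycDist C2 s23 t23 := ((mem23 u).1 ⟨hu2, hu3⟩).2
    have hρsync : cycDist C2 s23 u = cycDist C3 s23 u := hsync u hu2 hu3
    have huP12 : cycDist C2 s12 u ≤ cycDist C2 s12 t12 := ((mem12 u).1 ⟨hu1, hu2⟩).2
    have huP13 : cycDist C3 s13 u ≤ cycDist C3 s13 t13 := ((mem13 u).1 ⟨hu1, hu3⟩).2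
    rcases le_or_gt (cycDist C2 s23 u) (cycDist C2 s23 v) with hle | hlt
    · -- u before v in the block : distance u -> v small on C2
      have huv2 : cycDist C2 u v = cycDist C2 s23 v - cycDist C2 s23 u :=
        cycDist_sub nd2 hs23C2 hu2 hv2 hle
      have hut12 : cycDist C2 u t12 = cycDist C2 s12 t12 - cycDist C2 s12 u :=
        cycDist_sub nd2 hs12C2 hu2 ht12C2 huP12
      rcases cycDist_tri nd2 hu2 ht12C2 hv2 with h | h <;> omega
    · -- u after v in the block : distance v -> u small on C3
      have hvu3 : cycDist C3 v u = cycDist C3 s23 u - cycDist C3 s23 v :=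
        cycDist_sub nd3 hs23C3 hv3 hu3 (by omega)
      rcases cycDist_tri nd3 hv3 hs13C3 hu3 with h | h <;> omega
  -- consequences of claim1
  have ht13nC2 : t13 ∉ C2 := fun h => claim1 t13 ht13C1 h ht13C3
  have hs12nC3 : s12 ∉ C3 := fun h => claim1 s12 hs12C1 hs12C2 h
  have ht12nC3 : t12 ∉ C3 := fun h => claim1 t12 ht12C1 ht12C2 h
  have hs23nC1 : s23 ∉ C1 := fun h => claim1 s23 h hs23C2 hs23C3
  have ht13s12 : t13 ≠ s12 := fun h => claim1 t13 ht13C1 (h ▸ hs12C2) ht13C3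
  have ht13s23 : t13 ≠ s23 := fun h => ht13nC2 (h ▸ hs23C2)
  have hs12s23 : s12 ≠ s23 := fun h => hs12nC3 (h ▸ hs23C3)
  -- t13 is strictly before s23 on C3 : a3 > g
  have ht13nB3 : ¬ cycDist C3 s23 t13 ≤ cycDist C3 s23 t23 := by
    intro h
    exact ht13nC2 (((mem23' t13).2 ⟨ht13C3, h⟩).1)
  have hg_lt_a3 : cycDist C3 s23 v < cycDist C3 t13 v := by
    by_contra hcon
    push_neg at hcon
    -- then t13 would lie on the arc from s23 to v, inside the block
    rcases cycDist_tri nd3 hs23C3 ht13C3 hv3 with h | h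
    · -- d3(s23,t13) + a3 = g  => d3(s23,t13) ≤ g ≤ e : t13 in block
      have : cycDist C3 s23 t13 ≤ cycDist C3 s23 t23 := by omega
      exact ht13nB3 this
    · have h1' := cycDist_lt nd3 hs23C3 ht13C3
      have h2' := cycDist_lt nd3 ht13C3 hv3
      omega
  -- key distances on C3
  have hts23 : cycDist C3 t13 s23 = cycDist C3 t13 v - cycDist C3 s23 v := by
    rcases cycDist_tri nd3 ht13C3 hs23C3 hv3 with h | h
    · omega
    · have h1' := cycDist_lt nd3 ht13C3 hs23C3
      have h2' := cycDist_lt nd3 hs23C3 hv3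
      have h3' := cycDist_lt nd3 ht13C3 hv3
      omega
  have hs23t13 : cycDist C3 s23 t13 + cycDist C3 t13 s23 = C3.length :=
    cycDist_compl nd3 hs23C3 ht13C3 (fun h => ht13s23 h.symm)
  have ha3lt : cycDist C3 t13 v < C3.length := cycDist_lt nd3 ht13C3 hv3
  -- key distances on C2
  have ht12s23' : cycDist C2 t12 s23 = cycDist C2 t12 v - cycDist C2 s23 v := by
    rcases cycDist_tri nd2 ht12C2 hs23C2 hv2 with h | h
    · omega
    · have h1' := cycDist_lt nd2 ht12C2 hs23C2
      have h2' := cycDist_lt nd2 hs23C2 hv2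
      have h3' := cycDist_lt nd2 ht12C2 hv2
      omega
  have hs12s23d : cycDist C2 s12 s23 =
      cycDist C2 s12 t12 + cycDist C2 t12 s23 := by
    rcases cycDist_tri nd2 hs12C2 ht12C2 hs23C2 with h | h
    · omega
    · have h1' := cycDist_lt nd2 hs12C2 hs23C2
      have h2' := cycDist_lt nd2 hs23C2 hv2
      -- d12 + d2(t12,s23) = d2(s12,s23) + n2 is impossible :
      -- d12 + d2(t12,s23) = d12 + a2 - g = d2(s12,v) - g < n2
      omega
  -- the three paths
  set La := cycSub C1 t13 s12 with hLa_def
  set Lb := cycSub C2 s12 s23 with hLb_def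
  set P1 := La ++ Lb.tail with hP1_def
  set P2 := cycSub C3 t13 s23 with hP2_def
  set P3 := cycSub C3 s23 t13 with hP3_def
  have hPa : DiPath A t13 s12 La := diPath_cycSub hC1 ht13C1 hs12C1
  have hPb : DiPath A s12 s23 Lb := diPath_cycSub hC2 hs12C2 hs23C2
  have hDP2 : DiPath A t13 s23 P2 := diPath_cycSub hC3 ht13C3 hs23C3
  have hDP3 : DiPath A s23 t13 P3 := diPath_cycSub hC3 hs23C3 ht13C3
  -- s12 is not in the P13 block on C1, t13 not in the P12 block on C1
  have hs12nP13 : ¬ cycDist C1 s13 s12 ≤ cycDist C1 s13 t13 := by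
    intro h
    exact hs12nC3 (((mem13' s12).2 ⟨hs12C1, h⟩).2)
  have ht13nP12 : ¬ cycDist C1 s12 t13 ≤ cycDist C1 s12 t12 := by
    intro h
    exact ht13nC2 (((mem12' t13).2 ⟨ht13C1, h⟩).2)
  -- s12 not in block on C2, t13 not in block on C3 (already), needed for claims
  have hs12nB2 : ¬ cycDist C2 s23 s12 ≤ cycDist C2 s23 t23 := by
    intro h
    exact hs12nC3 (((mem23 s12).2 ⟨hs12C2, h⟩).2)
  -- La ∩ Lb = {s12}
  have hLaLb : ∀ w, w ∈ La → w ∈ Lb → w = s12 := by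
    intro w hwa hwb
    have hw1 : w ∈ C1 := cycSub_subset hwa
    have hw2 : w ∈ C2 := cycSub_subset hwb
    have hwd1 : cycDist C1 t13 w ≤ cycDist C1 t13 s12 := (mem_cycSub_iff.1 hwa).2
    have hwP12 : cycDist C1 s12 w ≤ cycDist C1 s12 t12 := ((mem12' w).1 ⟨hw1, hw2⟩).2
    by_contra hne
    have hwt13 : cycDist C1 w t13 = cycDist C1 s12 t13 - cycDist C1 s12 w :=
      cycDist_sub nd1 hs12C1 hw1 ht13C1 (by omega)
    have hcompl : cycDist C1 t13 w + cycDist C1 w t13 = C1.length := by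
      rw [Nat.add_comm]
      exact cycDist_compl nd1 hw1 ht13C1
        (fun h => ht13nC2 (h ▸ hw2))
    have hcompl2 : cycDist C1 t13 s12 + cycDist C1 s12 t13 = C1.length :=
      cycDist_compl nd1 ht13C1 hs12C1 ht13s12
    have h0 : cycDist C1 s12 w = 0 := by omega
    exact hne ((cycDist_eq_zero_iff nd1 hs12C1 hw1).1 h0).symm
  have hDP1 : DiPath A t13 s23 P1 := diPath_append hPa hPb hLaLb
  -- P1 ∩ P2 ⊆ {t13, s23}
  have hP1P2 : ∀ w, w ∈ P1 → w ∈ P2 → w = t13 ∨ w = s23 := by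
    intro w hw1 hw2'
    have hw3 : w ∈ C3 := cycSub_subset hw2'
    have hwd3 : cycDist C3 t13 w ≤ cycDist C3 t13 s23 := (mem_cycSub_iff.1 hw2').2
    rcases mem_diPath_append hw1 with hwa | hwb
    · -- w on the C1-part : w ∈ C1 ∩ C3 = P13, and then w = t13
      left
      have hw1' : w ∈ C1 := cycSub_subset hwa
      have hwP13 : cycDist C3 s13 w ≤ cycDist C3 s13 t13 := ((mem13 w).1 ⟨hw1', hw3⟩).2
      by_contra hne
      have hwt13 : cycDist C3 w t13 = cycDist C3 s13 t13 - cycDist C3 s13 w :=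
        cycDist_sub nd3 hs13C3 hw3 ht13C3 hwP13
      have hcompl : cycDist C3 t13 w + cycDist C3 w t13 = C3.length := by
        rw [Nat.add_comm]
        exact cycDist_compl nd3 hw3 ht13C3 hne
      omega
    · -- w on the C2-part : w ∈ C2 ∩ C3 = block, and then w = s23
      right
      have hw2 : w ∈ C2 := cycSub_subset hwb
      have hwB : cycDist C2 s23 w ≤ cycDist C2 s23 t23 := ((mem23 w).1 ⟨hw2, hw3⟩).2
      have hwsync : cycDist C2 s23 w = cycDist C3 s23 w := hsync w hw2 hw3
      have hwt13' : cycDist C3 w t13 = cycDist C3 s23 t13 - cycDist C3 s23 w := by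
        apply cycDist_sub nd3 hs23C3 hw3 ht13C3
        omega
      have hcompl : cycDist C3 t13 w + cycDist C3 w t13 = C3.length := by
        rw [Nat.add_comm]
        exact cycDist_compl nd3 hw3 ht13C3 (fun h => ht13nC2 (h ▸ hw2))
      have h0 : cycDist C3 s23 w = 0 := by omega
      exact ((cycDist_eq_zero_iff nd3 hs23C3 hw3).1 h0).symm
  -- P1 ∩ P3 ⊆ {t13, s23}
  have hP1P3 : ∀ w, w ∈ P1 → w ∈ P3 → w = t13 ∨ w = s23 := by
    intro w hw1 hw3'
    have hw3 : w ∈ C3 := cycSub_subset hw3'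
    have hwd3 : cycDist C3 s23 w ≤ cycDist C3 s23 t13 := (mem_cycSub_iff.1 hw3').2
    rcases mem_diPath_append hw1 with hwa | hwb
    · left
      have hw1' : w ∈ C1 := cycSub_subset hwa
      have hwd1 : cycDist C1 t13 w ≤ cycDist C1 t13 s12 := (mem_cycSub_iff.1 hwa).2
      have hwP13 : cycDist C1 s13 w ≤ cycDist C1 s13 t13 := ((mem13' w).1 ⟨hw1', hw3⟩).2
      by_contra hne
      have hwt13 : cycDist C1 w t13 = cycDist C1 s13 t13 - cycDist C1 s13 w :=
        cycDist_sub nd1 hs13C1 hw1' ht13C1 hwP13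
      have hcompl : cycDist C1 t13 w + cycDist C1 w t13 = C1.length := by
        rw [Nat.add_comm]
        exact cycDist_compl nd1 hw1' ht13C1 hne
      have ht13s12d : cycDist C1 t13 s12 = cycDist C1 s13 s12 - cycDist C1 s13 t13 :=
        cycDist_sub nd1 hs13C1 ht13C1 hs12C1 (by omega)
      have h1' := cycDist_lt nd1 hs13C1 hs12C1
      omega
    · right
      have hw2 : w ∈ C2 := cycSub_subset hwb
      have hwB : cycDist C2 s23 w ≤ cycDist C2 s23 t23 := ((mem23 w).1 ⟨hw2, hw3⟩).2
      have hwdb : cycDist C2 s12 w ≤ cycDist C2 s12 s23 := (mem_cycSub_iff.1 hwb).2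
      by_contra hne
      have hws12 : cycDist C2 w s12 = cycDist C2 s23 s12 - cycDist C2 s23 w :=
        cycDist_sub nd2 hs23C2 hw2 hs12C2 (by omega)
      have hcompl : cycDist C2 s12 w + cycDist C2 w s12 = C2.length := by
        rw [Nat.add_comm]
        exact cycDist_compl nd2 hw2 hs12C2 (fun h => hs12nC3 (h ▸ hw3))
      have hcompl2 : cycDist C2 s12 s23 + cycDist C2 s23 s12 = C2.length :=
        cycDist_compl nd2 hs12C2 hs23C2 hs12s23
      have h0 : cycDist C2 s23 w = 0 := by omega
      exact hne ((cycDist_eq_zero_iff nd2 hs23C2 hw2).1 h0).symm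
  -- P2 ∩ P3 ⊆ {t13, s23}
  have hP2P3 : ∀ w, w ∈ P2 → w ∈ P3 → w = t13 ∨ w = s23 := by
    intro w hw2' hw3'
    have hw3 : w ∈ C3 := cycSub_subset hw2'
    have hd2 : cycDist C3 t13 w ≤ cycDist C3 t13 s23 := (mem_cycSub_iff.1 hw2').2
    have hd3 : cycDist C3 s23 w ≤ cycDist C3 s23 t13 := (mem_cycSub_iff.1 hw3').2
    by_cases hwt : w = t13
    · exact Or.inl hwt
    right
    have hws23 : cycDist C3 w s23 = cycDist C3 t13 s23 - cycDist C3 t13 w :=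
      cycDist_sub nd3 ht13C3 hw3 hs23C3 hd2
    by_cases hws : w = s23
    · exact hws
    have hcompl : cycDist C3 s23 w + cycDist C3 w s23 = C3.length := by
      rw [Nat.add_comm]
      exact cycDist_compl nd3 hw3 hs23C3 hws
    have hcompl2 : cycDist C3 t13 s23 + cycDist C3 s23 t13 = C3.length := by
      rw [Nat.add_comm]; exact hs23t13
    have htw : 0 < cycDist C3 t13 w :=
      cycDist_pos nd3 ht13C3 hw3 (fun h => hwt h.symm)
    omega
  -- lengths
  have hlenLa : La.length = cycDist C1 t13 s12 + 1 := length_cycSub nd1 ht13C1 hs12C1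
  have hlenLb : Lb.length = cycDist C2 s12 s23 + 1 := length_cycSub nd2 hs12C2 hs23C2
  have hlenP1 : P1.length = La.length + Lb.length - 1 := by
    rw [hP1_def, List.length_append, List.length_tail]
    omega
  have hlen1 : k + 1 ≤ P1.length := by
    rw [hlenP1, hlenLa, hlenLb]
    omega
  have hlen2 : 1 + 1 ≤ P2.length := by
    rw [hP2_def, length_cycSub nd3 ht13C3 hs23C3]
    omega
  have hlen3 : k + 1 ≤ P3.length := by
    rw [hP3_def, length_cycSub nd3 hs23C3 ht13C3]
    omega
  -- P1 ≠ P2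
  have ht12Lb : t12 ∈ Lb := mem_cycSub_iff.2 ⟨ht12C2, by omega⟩
  obtain ⟨tb, htb⟩ : ∃ tb, Lb = s12 :: tb := by
    cases hLb : Lb with
    | nil =>
      exfalso
      have := hPb.2.2.1
      rw [hLb] at this
      exact absurd this (by simp)
    | cons c t =>
      have := hPb.2.2.1
      rw [hLb, List.head?_cons, Option.some_inj] at this
      exact ⟨t, by rw [this]⟩
  have ht12P1 : t12 ∈ P1 := by
    rcases List.mem_cons.1 (htb ▸ ht12Lb) with h | h
    · exact List.mem_append.2 (Or.inl (h ▸ diPath_last_mem hPa))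
    · refine List.mem_append.2 (Or.inr ?_)
      rw [htb]
      simpa using h
  have hP1neP2 : P1 ≠ P2 := fun h => ht12nC3 (cycSub_subset (h ▸ ht12P1))
  exact ⟨t13, s23, P1, P2, P3, hDP1, hDP2, hDP3, hlen1, hlen2, hlen3, hP1neP2,
    intDisj_of_subset hDP1 hP1P2, intDisj_of_subset hDP1 hP1P3,
    intDisj_of_subset hDP2 hP2P3⟩

end Main

theorem stmt14' {V : Type u} [Fintype V] [DecidableEq V] (k : ℕ) (hk : 1 ≤ k)
    (A : V → V → Prop) (hfree : ¬ SubdivB A k 1 k)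
    (C1 C2 C3 : List V)
    (h1 : DiCycle A C1 ∧ 8 * k ≤ C1.length)
    (h2 : DiCycle A C2 ∧ 8 * k ≤ C2.length)
    (h3 : DiCycle A C3 ∧ 8 * k ≤ C3.length)
    (hne12 : C1 ≠ C2) (hne13 : C1 ≠ C3) (hne23 : C2 ≠ C3)
    (s12 t12 s13 t13 s23 t23 : V)
    (hi12 : InterPath k C1 C2 s12 t12)
    (hi13 : InterPath k C1 C3 s13 t13)
    (hi23 : InterPath k C2 C3 s23 t23)
    (v : V) (hv2 : v ∈ C2) (hv3 : v ∈ C3) (hv1 : v ∉ C1) :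
    Xor' (cycDist C2 t12 v < 3 * k ∧ cycDist C3 t13 v < 3 * k)
         (cycDist C2 v s12 < 3 * k ∧ cycDist C3 v s13 < 3 * k) := by
  have nd1 : C1.Nodup := h1.1.2.2.1
  have nd2 : C2.Nodup := h2.1.2.2.1
  have nd3 : C3.Nodup := h3.1.2.2.1
  obtain ⟨hs12C1, hs12C2, ht12C1, ht12C2, hd12k, hd12eq⟩ :=
    interPath_facts hk nd1 nd2 h1.2 h2.2 hi12
  obtain ⟨hs13C1, hs13C3, ht13C1, ht13C3, hd13k, hd13eq⟩ :=
    interPath_facts hk nd1 nd3 h1.2 h3.2 hi13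
  have mem12 : ∀ x, (x ∈ C1 ∧ x ∈ C2) ↔
      (x ∈ C2 ∧ cycDist C2 s12 x ≤ cycDist C2 s12 t12) := by
    intro x; rw [hi12.2.2.1 x, hi12.2.2.2.1, mem_cycSub_iff]
  have mem13 : ∀ x, (x ∈ C1 ∧ x ∈ C3) ↔
      (x ∈ C3 ∧ cycDist C3 s13 x ≤ cycDist C3 s13 t13) := by
    intro x; rw [hi13.2.2.1 x, hi13.2.2.2.1, mem_cycSub_iff]
  have hvnP12 : ¬ cycDist C2 s12 v ≤ cycDist C2 s12 t12 := by
    intro h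
    exact hv1 (((mem12 v).2 ⟨hv2, h⟩).1)
  have hvnP13 : ¬ cycDist C3 s13 v ≤ cycDist C3 s13 t13 := by
    intro h
    exact hv1 (((mem13 v).2 ⟨hv3, h⟩).1)
  have hvs12 : v ≠ s12 := fun h => hv1 (h ▸ hs12C1)
  have hvs13 : v ≠ s13 := fun h => hv1 (h ▸ hs13C1)
  have ha2v : cycDist C2 t12 v = cycDist C2 s12 v - cycDist C2 s12 t12 :=
    cycDist_sub nd2 hs12C2 ht12C2 hv2 (by omega)
  have hb2v : cycDist C2 v s12 + cycDist C2 s12 v = C2.length := by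
    rw [Nat.add_comm]
    exact cycDist_compl nd2 hs12C2 hv2 (fun h => hvs12 h.symm)
  have hs12vlt : cycDist C2 s12 v < C2.length := cycDist_lt nd2 hs12C2 hv2
  have ha3v : cycDist C3 t13 v = cycDist C3 s13 v - cycDist C3 s13 t13 :=
    cycDist_sub nd3 hs13C3 ht13C3 hv3 (by omega)
  have hb3v : cycDist C3 v s13 + cycDist C3 s13 v = C3.length := by
    rw [Nat.add_comm]
    exact cycDist_compl nd3 hs13C3 hv3 (fun h => hvs13 h.symm)
  have hs13vlt : cycDist C3 s13 v < C3.length := cycDist_lt nd3 hs13C3 hv3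
  have h82 := h2.2
  have h83 := h3.2
  -- not both
  have hnotboth : ¬ ((cycDist C2 t12 v < 3 * k ∧ cycDist C3 t13 v < 3 * k) ∧
      (cycDist C2 v s12 < 3 * k ∧ cycDist C3 v s13 < 3 * k)) := by
    rintro ⟨⟨hA, _⟩, ⟨hB, _⟩⟩
    omega
  -- at least one
  have hor : (cycDist C2 t12 v < 3 * k ∧ cycDist C3 t13 v < 3 * k) ∨
      (cycDist C2 v s12 < 3 * k ∧ cycDist C3 v s13 < 3 * k) := by
    by_contra hcon
    push_neg at hcon
    obtain ⟨hna, hnb⟩ := hcon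
    have ha : 3 * k ≤ cycDist C2 t12 v ∨ 3 * k ≤ cycDist C3 t13 v := by
      by_contra h
      push_neg at h
      exact absurd (hna (by omega)) (by omega)
    have hb : 3 * k ≤ cycDist C2 v s12 ∨ 3 * k ≤ cycDist C3 v s13 := by
      by_contra h
      push_neg at h
      exact absurd (hnb h.1) (by omega)
    have hcase : (3 * k ≤ cycDist C2 t12 v ∧ 3 * k ≤ cycDist C3 v s13) ∨
        (3 * k ≤ cycDist C3 t13 v ∧ 3 * k ≤ cycDist C2 v s12) := by
      rcases ha with ha | ha <;> rcases hb with hb | hb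
      · rcases le_or_gt (3 * k) (cycDist C3 v s13) with h | h
        · exact Or.inl ⟨ha, h⟩
        · exact Or.inr ⟨by omega, hb⟩
      · exact Or.inl ⟨ha, hb⟩
      · exact Or.inr ⟨ha, hb⟩
      · rcases le_or_gt (3 * k) (cycDist C2 t12 v) with h | h
        · exact Or.inl ⟨h, hb⟩
        · exact Or.inr ⟨ha, by omega⟩
    rcases hcase with ⟨hA, hB⟩ | ⟨hA, hB⟩
    · exact hfree (mainB hk h1 h2 h3 hi12 hi13 hi23 hv2 hv3 hv1 hA hB)
    · exact hfree (mainB hk h1 h3 h2 hi13 hi12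
        (interPath_symm hk nd2 nd3 h2.2 h3.2 hi23) hv3 hv2 hv1 hA hB)
  rcases hor with h | h
  · exact Or.inl ⟨h, fun h' => hnotboth ⟨h, h'⟩⟩
  · exact Or.inr ⟨h, fun h' => hnotboth ⟨h', h⟩⟩

/-- Lemma 15: in a `B(k,1;k)`-subdivision-free digraph, given three pairwise
intersecting cycles `C1, C2, C3` of a `k`-suitable collection and a vertex
`v ∈ C2 ∩ C3` with `v ∉ C1`, exactly one of the following holds:
(i) `C2[t12,v]` and `C3[t13,v]` both have length less than `3k`;
(ii) `C2[v,s12]` and `C3[v,s13]` both have length less than `3k`. -/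
theorem stmt14 {V : Type u} [Fintype V] [DecidableEq V] (k : ℕ) (hk : 1 ≤ k)
    (A : V → V → Prop) (hfree : ¬ SubdivB A k 1 k)
    (C1 C2 C3 : List V)
    (h1 : DiCycle A C1 ∧ 8 * k ≤ C1.length)
    (h2 : DiCycle A C2 ∧ 8 * k ≤ C2.length)
    (h3 : DiCycle A C3 ∧ 8 * k ≤ C3.length)
    (hne12 : C1 ≠ C2) (hne13 : C1 ≠ C3) (hne23 : C2 ≠ C3)
    (s12 t12 s13 t13 s23 t23 : V)
    (hi12 : InterPath k C1 C2 s12 t12)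
    (hi13 : InterPath k C1 C3 s13 t13)
    (hi23 : InterPath k C2 C3 s23 t23)
    (v : V) (hv2 : v ∈ C2) (hv3 : v ∈ C3) (hv1 : v ∉ C1) :
    Xor' (cycDist C2 t12 v < 3 * k ∧ cycDist C3 t13 v < 3 * k)
         (cycDist C2 v s12 < 3 * k ∧ cycDist C3 v s13 < 3 * k) := by
  exact stmt14' k hk A hfree C1 C2 C3 h1 h2 h3 hne12 hne13 hne23
    s12 t12 s13 t13 s23 t23 hi12 hi13 hi23 v hv2 hv3 hv1
end

section
/- Let D be a strongly connected digraph whose underlying graph has chromatic number at least 4. Then D contains a directed cycle C and a directed path P of length at least 2 whose endpoints lie on C and whose internal vertices do not lie on C, with P oriented from one vertex of C to another. -/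
universe u

section Helpers
variable {V : Type u} {A : V → V → Prop}

@[simp] lemma chain'_iff_isChain' {R : V → V → Prop} {l : List V} :
    List.Chain' R l ↔ List.IsChain R l := Iff.rfl

def HasEar (A : V → V → Prop) : Prop :=
  ∃ (C P : List V) (x y : V), DiCycle A C ∧ x ∈ C ∧ y ∈ C ∧ DiPath A x y P ∧
      3 ≤ P.length ∧ ∀ v ∈ internals P, v ∉ C

lemma hd_decomp {l : List V} {x : V} (h : l.head? = some x) : ∃ t, l = x :: t := by
  cases l <;> simp_all

lemma last_decomp {l : List V} {c : V} (h : l.getLast? = some c) : ∃ s, l = s ++ [c] := by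
  induction l with
  | nil => simp at h
  | cons a t ih =>
    cases t with
    | nil => simp_all
    | cons b t' =>
      rw [List.getLast?_cons_cons] at h
      obtain ⟨s, hs⟩ := ih h
      exact ⟨a :: s, by rw [hs]; rfl⟩

lemma getLast?_suffix {l₂ l : List V} (h : l₂ <:+ l) (hne : l₂ ≠ []) :
    l.getLast? = l₂.getLast? := by
  obtain ⟨s, rfl⟩ := h
  rw [List.getLast?_append]
  cases h2 : l₂.getLast? with
  | none => exact absurd (List.getLast?_eq_none_iff.mp h2) hne
  | some c => rfl

lemma head?_prefix {l₁ l : List V} (h : l₁ <+: l) (hne : l₁ ≠ []) :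
    l.head? = l₁.head? := by
  obtain ⟨s, rfl⟩ := h
  rw [List.head?_append]
  cases h2 : l₁.head? with
  | none => exact absurd (List.head?_eq_none_iff.mp h2) hne
  | some c => rfl

lemma mem_of_head? {l : List V} {x : V} (h : l.head? = some x) : x ∈ l := by
  obtain ⟨t, rfl⟩ := hd_decomp h; simp

lemma mem_of_last? {l : List V} {x : V} (h : l.getLast? = some x) : x ∈ l := by
  obtain ⟨s, rfl⟩ := last_decomp h; simp

lemma not_mem_tail_of_head? {l : List V} {x : V} (hn : l.Nodup) (h : l.head? = some x) :
    x ∉ l.tail := by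
  obtain ⟨t, rfl⟩ := hd_decomp h; simp_all

lemma not_mem_dropLast_of_last? {l : List V} {c : V} (hn : l.Nodup) (h : l.getLast? = some c) :
    c ∉ l.dropLast := by
  obtain ⟨s, rfl⟩ := last_decomp h
  rw [List.dropLast_concat]
  simp_all [List.nodup_append]
  exact fun h => hn.2 c h rfl

lemma internals_subset_s18 {l : List V} : ∀ v ∈ internals l, v ∈ l.tail ∧ v ∈ l.dropLast := by
  intro v hv
  unfold internals at hv
  constructor
  · exact List.dropLast_subset _ hv
  · cases l with
    | nil => simp at hv
    | cons a t =>
      cases t with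
      | nil => simp [internals] at hv
      | cons b t' =>
        simp only [List.tail_cons] at hv
        rw [List.dropLast_cons₂]
        exact List.mem_cons_of_mem _ hv

lemma mem_of_internals {l : List V} {v : V} (h : v ∈ internals l) : v ∈ l :=
  List.tail_subset _ (internals_subset_s18 v h).1

end Helpers
section Helpers2
variable {V : Type u} {A : V → V → Prop}

lemma dedup_walk : ∀ (n : ℕ) (l : List V), l.length ≤ n → l.Chain' A →
    ∃ l' : List V, l'.Chain' A ∧ l'.Nodup ∧ l'.head? = l.head? ∧ l'.getLast? = l.getLast? ∧
      ∀ v ∈ l', v ∈ l := by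
  intro n
  induction n with
  | zero =>
    intro l hl _
    have : l = [] := List.length_eq_zero_iff.mp (Nat.le_zero.mp hl)
    subst this
    exact ⟨[], by simp⟩
  | succ n ih =>
    intro l hl hc
    match l with
    | [] => exact ⟨[], by simp⟩
    | a :: t =>
      by_cases ha : a ∈ t
      · obtain ⟨s, u, rfl⟩ := List.append_of_mem ha
        have hsuf : (a :: u) <:+ (a :: (s ++ a :: u)) := ⟨a :: s, by simp⟩
        have hc' := hc.suffix hsuf
        have hlen : (a :: u).length ≤ n := by
          simp only [List.length_cons, List.length_append] at hl ⊢; omega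
        obtain ⟨l', h1, h2, h3, h4, h5⟩ := ih _ hlen hc'
        refine ⟨l', h1, h2, by rw [h3]; rfl, ?_, ?_⟩
        · rw [h4, getLast?_suffix hsuf (by simp)]
        · intro v hv
          exact hsuf.subset (h5 v hv)
      · cases t with
        | nil => exact ⟨[a], by simp⟩
        | cons b t' =>
          obtain ⟨l', h1, h2, h3, h4, h5⟩ := ih (b :: t') (by simp only [List.length_cons] at hl ⊢; omega) hc.tail
          obtain ⟨t'', rfl⟩ := hd_decomp h3
          refine ⟨a :: b :: t'', ?_, ?_, rfl, ?_, ?_⟩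
          · rw [chain'_iff_isChain', List.isChain_cons_cons]
            exact ⟨List.isChain_cons_cons.mp hc |>.1, h1⟩
          · rw [List.nodup_cons]
            exact ⟨fun hmem => ha (h5 a hmem), h2⟩
          · rw [show a :: b :: t'' = [a] ++ (b :: t'') from rfl,
                show a :: b :: t' = [a] ++ (b :: t') from rfl,
                List.getLast?_append, List.getLast?_append, h4]
          · intro v hv
            rcases List.mem_cons.mp hv with rfl | hv
            · exact List.mem_cons_self
            · exact List.mem_cons_of_mem _ (h5 v hv)

lemma first_split (Q : V → Prop) : ∀ l : List V, (∃ w ∈ l, Q w) →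
    ∃ l₁ z l₂, l = l₁ ++ z :: l₂ ∧ Q z ∧ ∀ w ∈ l₁, ¬ Q w := by
  intro l
  induction l with
  | nil => rintro ⟨w, hw, -⟩; simp at hw
  | cons a t ih =>
    intro hex
    by_cases hQa : Q a
    · exact ⟨[], a, t, rfl, hQa, by simp⟩
    · obtain ⟨w, hw, hQw⟩ := hex
      have hwt : w ∈ t := by
        rcases List.mem_cons.mp hw with rfl | h
        · exact absurd hQw hQa
        · exact h
      obtain ⟨l₁, z, l₂, heq, hz, hl₁⟩ := ih ⟨w, hwt, hQw⟩
      refine ⟨a :: l₁, z, l₂, by rw [heq]; rfl, hz, ?_⟩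
      intro w' hw'
      rcases List.mem_cons.mp hw' with rfl | h
      · exact hQa
      · exact hl₁ w' h

lemma trunc_last (Q : V → Prop) : ∀ (n : ℕ) (l : List V), l.length ≤ n → l.Chain' A →
    ∀ h, l.head? = some h → Q h →
    ∃ (x : V) (l' : List V), l'.Chain' A ∧ l'.head? = some x ∧ Q x ∧
      l'.getLast? = l.getLast? ∧ ∀ z ∈ l'.tail, ¬ Q z := by
  intro n
  induction n with
  | zero =>
    intro l hl _ h hh _
    obtain ⟨t, rfl⟩ := hd_decomp hh
    simp at hl
  | succ n ih =>
    intro l hl hc h hh hQ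
    obtain ⟨t, rfl⟩ := hd_decomp hh
    by_cases ht : ∃ z ∈ t, Q z
    · obtain ⟨w, hw, hQw⟩ := ht
      obtain ⟨t₁, t₂, rfl⟩ := List.append_of_mem hw
      have hsuf : (w :: t₂) <:+ (h :: (t₁ ++ w :: t₂)) := ⟨h :: t₁, by simp⟩
      have hlen : (w :: t₂).length ≤ n := by
        simp only [List.length_cons, List.length_append] at hl ⊢; omega
      obtain ⟨x, l', h1, h2, h3, h4, h5⟩ := ih _ hlen (hc.suffix hsuf) w rfl hQw
      exact ⟨x, l', h1, h2, h3, by rw [h4, getLast?_suffix hsuf (by simp)], h5⟩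
    · push_neg at ht
      exact ⟨h, h :: t, hc, rfl, hQ, rfl, by simpa using ht⟩

lemma trunc_first (Q : V → Prop) {l : List V} (hc : l.Chain' A) {m : V}
    (hm : l.head? = some m) (hmQ : ¬ Q m) (hex : ∃ w ∈ l, Q w) :
    ∃ (c : V) (l' : List V), l'.Chain' A ∧ l'.head? = some m ∧ l'.getLast? = some c ∧ Q c ∧
      ∀ z ∈ l'.dropLast, ¬ Q z := by
  obtain ⟨l₁, z, l₂, rfl, hz, hl₁⟩ := first_split Q l hex
  have hpre : (l₁ ++ [z]) <+: (l₁ ++ z :: l₂) := ⟨l₂, by simp⟩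
  have hl₁ne : l₁ ≠ [] := by
    rintro rfl
    simp only [List.nil_append, List.head?_cons] at hm
    obtain rfl : z = m := by injection hm
    exact hmQ hz
  refine ⟨z, l₁ ++ [z], hc.prefix hpre, ?_, ?_, hz, ?_⟩
  · rw [← head?_prefix hpre (by simp), hm]
  · simp
  · rw [List.dropLast_concat]
    exact hl₁

lemma compose_walk {l₁ l₂ : List V} {m : V} (h₁ : l₁.Chain' A) (h₂ : l₂.Chain' A)
    (hl : l₁.getLast? = some m) (hh : l₂.head? = some m) :
    (l₁ ++ l₂.tail).Chain' A ∧ (l₁ ++ l₂.tail).head? = l₁.head? ∧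
      (l₁ ++ l₂.tail).getLast? = l₂.getLast? := by
  obtain ⟨t, rfl⟩ := hd_decomp hh
  simp only [List.tail_cons]
  refine ⟨List.isChain_append.mpr ⟨h₁, h₂.tail, ?_⟩, ?_, ?_⟩
  · intro a ha b hb
    rw [hl] at ha
    obtain rfl : m = a := by injection ha
    exact (List.isChain_cons.mp h₂).1 b hb
  · rw [List.head?_append]
    cases hx : l₁.head? with
    | none => simp [List.head?_eq_none_iff.mp hx] at hl
    | some c => rfl
  · cases t with
    | nil => simp [hl]
    | cons b t' =>
      rw [getLast?_suffix (l := l₁ ++ b :: t') ⟨l₁, rfl⟩ (by simp) ,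
          List.getLast?_cons_cons]

end Helpers2
section Helpers3
variable {V : Type u} {A : V → V → Prop}

lemma mem_tail_mid' {w1 w2 : List V} {m b : V} (h : b ∈ w2) :
    b ∈ (w1 ++ m :: w2).tail := by
  cases w1 with
  | nil => simp [h]
  | cons a t =>
    rw [List.cons_append, List.tail_cons]
    simp [h]

lemma surgery {l : List V} {x c : V} (hc : l.Chain' A) (hh : l.head? = some x)
    (hl : l.getLast? = some c) (hxc : x ≠ c) (M : V → Prop)
    (hmem : ∀ v ∈ l, v = x ∨ v = c ∨ M v)
    (hxM : ¬ M x) (hcM : ¬ M c) (hxt : x ∉ l.tail) (hcd : c ∉ l.dropLast)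
    {m : V} (hm : m ∈ l) (hmM : M m) :
    ∃ P, DiPath A x c P ∧ 3 ≤ P.length ∧ ∀ v ∈ internals P, M v := by
  obtain ⟨w1, w2, rfl⟩ := List.append_of_mem hm
  have hpre : (w1 ++ [m]) <+: (w1 ++ m :: w2) := ⟨w2, by simp⟩
  have hsuf : (m :: w2) <:+ (w1 ++ m :: w2) := ⟨w1, rfl⟩
  obtain ⟨p1, hp1c, hp1n, hp1h, hp1l, hp1s⟩ :=
    dedup_walk (w1 ++ [m]).length (w1 ++ [m]) le_rfl (hc.prefix hpre)
  obtain ⟨p2, hp2c, hp2n, hp2h, hp2l, hp2s⟩ :=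
    dedup_walk (m :: w2).length (m :: w2) le_rfl (hc.suffix hsuf)
  rw [show (w1 ++ [m]).getLast? = some m by simp] at hp1l
  rw [show (m :: w2).head? = some m from rfl] at hp2h
  rw [← head?_prefix hpre (by simp), hh] at hp1h
  rw [← getLast?_suffix hsuf (by simp), hl] at hp2l
  have hmx : m ≠ x := fun h => hxM (h ▸ hmM)
  have hmc : m ≠ c := fun h => hcM (h ▸ hmM)
  have hxp2 : x ∉ p2 := by
    intro hx
    rcases List.mem_cons.mp (hp2s x hx) with h | h
    · exact hmx h.symm
    · exact hxt (mem_tail_mid' h)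
  have hcp1 : c ∉ p1 := by
    intro hcc
    rcases List.mem_append.mp (hp1s c hcc) with h | h
    · apply hcd
      have : (w1 ++ m :: w2).dropLast = w1 ++ (m :: w2).dropLast :=
        List.dropLast_append_of_ne_nil (by simp)
      rw [this]
      exact List.mem_append_left _ h
    · simp at h
      exact hmc h.symm
  have hmem1 : m ∈ p1 := mem_of_last? hp1l
  have hmem2 : m ∈ p2 := mem_of_head? hp2h
  obtain ⟨q1, z, rest, hp1eq, hz2, hq1⟩ := first_split (· ∈ p2) p1 ⟨m, hmem1, hmem2⟩
  obtain ⟨q2, q2', hp2eq⟩ := List.append_of_mem hz2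
  have hzx : z ≠ x := fun h => hxp2 (h ▸ hz2)
  have hzp1 : z ∈ p1 := by rw [hp1eq]; simp
  have hzc : z ≠ c := fun h => hcp1 (h ▸ hzp1)
  have hsub1 : ∀ v ∈ p1, v ∈ w1 ++ m :: w2 := by
    intro v hv
    rcases List.mem_append.mp (hp1s v hv) with h | h
    · exact List.mem_append_left _ h
    · simp at h
      subst h
      exact hm
  have hsub2 : ∀ v ∈ p2, v ∈ w1 ++ m :: w2 := fun v hv => hsuf.subset (hp2s v hv)
  have hq1ne : q1 ≠ [] := by
    rintro rfl
    rw [hp1eq] at hp1h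
    simp at hp1h
    exact hzx hp1h
  have hq2'ne : q2' ≠ [] := by
    rintro rfl
    rw [hp2eq] at hp2l
    simp at hp2l
    exact hzc hp2l
  have hnd : (q1 ++ z :: q2').Nodup := by
    rw [List.nodup_append]
    refine ⟨(hp1eq ▸ hp1n).sublist (by simp), (hp2eq ▸ hp2n).sublist (by simp), ?_⟩
    intro a ha b hb rfl
    apply hq1 a ha
    rw [hp2eq]
    rcases List.mem_cons.mp hb with rfl | h
    · simp
    · exact List.mem_append_right _ (List.mem_cons_of_mem _ h)
  have hhq : (q1 ++ z :: q2').head? = some x := by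
    have h1 : p1.head? = q1.head? := head?_prefix ⟨z :: rest, hp1eq.symm⟩ hq1ne
    have h2 : (q1 ++ z :: q2').head? = q1.head? := head?_prefix ⟨z :: q2', rfl⟩ hq1ne
    rw [h2, ← h1, hp1h]
  have hlq : (q1 ++ z :: q2').getLast? = some c := by
    have h1 : p2.getLast? = (z :: q2').getLast? := getLast?_suffix ⟨q2, hp2eq.symm⟩ (by simp)
    have h2 : (q1 ++ z :: q2').getLast? = (z :: q2').getLast? := getLast?_suffix ⟨q1, rfl⟩ (by simp)
    rw [h2, ← h1, hp2l]
  refine ⟨q1 ++ z :: q2', ⟨?_, hnd, hhq, hlq⟩, ?_, ?_⟩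
  · rw [chain'_iff_isChain', List.isChain_append]
    refine ⟨(hp1eq ▸ hp1c).prefix ⟨z :: rest, rfl⟩, (hp2eq ▸ hp2c).suffix ⟨q2, rfl⟩, ?_⟩
    intro a ha b hb
    have := List.isChain_append.mp (hp1eq ▸ hp1c)
    exact this.2.2 a ha b (by simpa using hb)
  · rw [List.length_append]
    have h1 : 1 ≤ q1.length := List.length_pos_iff.mpr hq1ne
    have h2 : 1 ≤ q2'.length := List.length_pos_iff.mpr hq2'ne
    simp only [List.length_cons]
    omega
  · intro v hv
    have hvr : v ∈ q1 ++ z :: q2' := mem_of_internals hv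
    have hvl : v ∈ w1 ++ m :: w2 := by
      rcases List.mem_append.mp hvr with h | h
      · exact hsub1 v (by rw [hp1eq]; exact List.mem_append_left _ h)
      · exact hsub2 v (by rw [hp2eq]; exact List.mem_append_right _ h)
    have hne_x : v ≠ x := by
      rintro rfl
      exact not_mem_tail_of_head? hnd hhq (internals_subset_s18 _ hv).1
    have hne_c : v ≠ c := by
      rintro rfl
      exact not_mem_dropLast_of_last? hnd hlq (internals_subset_s18 _ hv).2
    rcases hmem v hvl with h | h | h
    · exact absurd h hne_x
    · exact absurd h hne_c
    · exact h

end Helpers3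
section Cyc
variable {V : Type u} {A : V → V → Prop}

def CycIdx (A : V → V → Prop) (l : List V) : Prop :=
  ∀ i : ℕ, i < l.length → ∀ a b, l[i]? = some a →
    l[(i + 1) % l.length]? = some b → A a b

lemma head?_eq_get? (l : List V) : l.head? = l[0]? := by cases l <;> rfl

lemma dicycle_cycIdx {l : List V} (h : DiCycle A l) : CycIdx A l := by
  obtain ⟨hne, hch, hnd, hcl⟩ := h
  intro i hi a b ha hb
  rcases Nat.lt_or_ge (i + 1) l.length with h1 | h1
  · rw [Nat.mod_eq_of_lt h1] at hb
    obtain ⟨_, rfl⟩ := List.getElem?_eq_some_iff.mp ha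
    obtain ⟨_, rfl⟩ := List.getElem?_eq_some_iff.mp hb
    exact List.isChain_iff_getElem.mp hch i (by omega)
  · have hmod : (i + 1) % l.length = 0 := by
      have : i + 1 = l.length := by omega
      rw [this, Nat.mod_self]
    rw [hmod] at hb
    apply hcl a b
    · rw [List.getLast?_eq_getElem?, show l.length - 1 = i by omega]; exact ha
    · rw [head?_eq_get?]; exact hb

lemma cycIdx_dicycle {l : List V} (hne : l ≠ []) (hnd : l.Nodup) (h : CycIdx A l) :
    DiCycle A l := by
  have hl : 0 < l.length := List.length_pos_iff.mpr hne
  refine ⟨hne, ?_, hnd, ?_⟩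
  · rw [chain'_iff_isChain', List.isChain_iff_getElem]
    intro i hi
    apply h i (by omega)
    · exact List.getElem?_eq_getElem _
    · rw [Nat.mod_eq_of_lt (by omega)]; exact List.getElem?_eq_getElem _
  · intro a b hla hhb
    apply h (l.length - 1) (by omega) a b
    · rw [← List.getLast?_eq_getElem?]; exact hla
    · have hmod : (l.length - 1 + 1) % l.length = 0 := by
        rw [show l.length - 1 + 1 = l.length by omega, Nat.mod_self]
      rw [hmod, ← head?_eq_get?]; exact hhb

lemma get?_rotate {l : List V} {k i : ℕ} (hi : i < l.length) :
    (l.rotate k)[i]? = l[(i + k) % l.length]? := by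
  have h1 : i < (l.rotate k).length := by rw [List.length_rotate]; exact hi
  rw [List.getElem?_eq_getElem h1, List.getElem?_eq_getElem (Nat.mod_lt _ (by omega)), List.getElem_rotate]

lemma cycIdx_rotate {l : List V} (h : CycIdx A l) (k : ℕ) : CycIdx A (l.rotate k) := by
  intro i hi a b ha hb
  rw [List.length_rotate] at hi
  have hl : 0 < l.length := by omega
  rw [get?_rotate hi] at ha
  rw [List.length_rotate] at hb
  rw [get?_rotate (Nat.mod_lt _ hl)] at hb
  apply h ((i + k) % l.length) (Nat.mod_lt _ hl) a b ha
  have he : ((i + 1) % l.length + k) % l.length = ((i + k) % l.length + 1) % l.length := by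
    rw [Nat.mod_add_mod, Nat.mod_add_mod]; congr 1; omega
  rw [← he]; exact hb

lemma rotate_ne_nil {l : List V} (hne : l ≠ []) (k : ℕ) : l.rotate k ≠ [] := by
  intro hc
  apply hne
  have := congrArg List.length hc
  rw [List.length_rotate] at this
  exact List.length_eq_zero_iff.mp this

lemma dicycle_rotate {l : List V} (h : DiCycle A l) (k : ℕ) : DiCycle A (l.rotate k) :=
  cycIdx_dicycle (rotate_ne_nil h.1 k) (List.nodup_rotate.mpr h.2.2.1)
    (cycIdx_rotate (dicycle_cycIdx h) k)

lemma zip_tail_get? {l : List V} {i : ℕ} (h : i + 1 < l.length) :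
    (l.zip l.tail)[i]? = some (l.get ⟨i, by omega⟩, l.get ⟨i + 1, h⟩) := by
  have h2 : i < (l.zip l.tail).length := by
    rw [List.length_zip, List.length_tail]; omega
  rw [List.getElem?_eq_getElem h2]
  congr 1
  rw [List.get_eq_getElem, List.getElem_zip]
  simp [List.get_eq_getElem, List.getElem_tail]

lemma cycArc_iff {l : List V} (hne : l ≠ []) {a b : V} :
    cycArc l a b ↔
      ∃ i, i < l.length ∧ l[i]? = some a ∧ l[(i + 1) % l.length]? = some b := by
  have hl : 0 < l.length := List.length_pos_iff.mpr hne
  constructor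
  · rintro (hz | ⟨hla, hhb⟩)
    · obtain ⟨n, hn⟩ := List.mem_iff_getElem?.mp hz
      have hn1 : n + 1 < l.length := by
        have := (List.getElem?_eq_some_iff.mp hn).1
        rw [List.length_zip, List.length_tail] at this
        omega
      rw [zip_tail_get? hn1] at hn
      injection hn with hn
      refine ⟨n, by omega, ?_, ?_⟩
      · rw [List.getElem?_eq_getElem (show n < l.length by omega)]
        exact congrArg some (congrArg Prod.fst hn)
      · rw [Nat.mod_eq_of_lt hn1, List.getElem?_eq_getElem hn1]
        exact congrArg some (congrArg Prod.snd hn)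
    · refine ⟨l.length - 1, by omega, ?_, ?_⟩
      · rw [← List.getLast?_eq_getElem?]; exact hla
      · rw [show (l.length - 1 + 1) % l.length = 0 by
              rw [show l.length - 1 + 1 = l.length by omega, Nat.mod_self],
            ← head?_eq_get?]
        exact hhb
  · rintro ⟨i, hi, ha, hb⟩
    rcases Nat.lt_or_ge (i + 1) l.length with h1 | h1
    · left
      rw [List.mem_iff_getElem?]
      refine ⟨i, ?_⟩
      rw [zip_tail_get? h1]
      rw [Nat.mod_eq_of_lt h1] at hb
      rw [List.getElem?_eq_getElem (show i < l.length by omega)] at ha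
      rw [List.getElem?_eq_getElem h1] at hb
      injection ha with ha
      injection hb with hb
      subst ha hb; rfl
    · right
      have hieq : i = l.length - 1 := by omega
      have hmod : (i + 1) % l.length = 0 := by
        rw [show i + 1 = l.length by omega, Nat.mod_self]
      constructor
      · rw [List.getLast?_eq_getElem?, ← hieq]; exact ha
      · rw [head?_eq_get?, ← hmod]; exact hb

lemma cycArc_rotate {l : List V} {k : ℕ} {a b : V} (hne : l ≠ [])
    (h : cycArc (l.rotate k) a b) : cycArc l a b := by
  have hl : 0 < l.length := List.length_pos_iff.mpr hne
  rw [cycArc_iff (rotate_ne_nil hne k)] at h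
  obtain ⟨i, hi, ha, hb⟩ := h
  rw [List.length_rotate] at hi hb
  rw [get?_rotate hi] at ha
  rw [get?_rotate (Nat.mod_lt _ hl)] at hb
  rw [cycArc_iff hne]
  refine ⟨(i + k) % l.length, Nat.mod_lt _ hl, ha, ?_⟩
  have he : ((i + 1) % l.length + k) % l.length = ((i + k) % l.length + 1) % l.length := by
    rw [Nat.mod_add_mod, Nat.mod_add_mod]; congr 1; omega
  rw [← he]; exact hb

end Cyc
section Chord
variable {V : Type u} {A : V → V → Prop}

lemma chord0 {C : List V} (hC : DiCycle A C) {j : ℕ} (hj : j < C.length) (h2j : 2 ≤ j)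
    {u w : V} (hu : C.head? = some u) (hw : C[j]? = some w) (harc : A u w) :
    HasEar A := by
  obtain ⟨hne, hch, hnd, hcl⟩ := hC
  have hl : 0 < C.length := List.length_pos_iff.mpr hne
  have hu0 : C[0]? = some u := by rw [← head?_eq_get?]; exact hu
  obtain ⟨hwlt, hwget⟩ := List.getElem?_eq_some_iff.mp hw
  obtain ⟨hult, huget⟩ := List.getElem?_eq_some_iff.mp hu0
  have hinj : Function.Injective C.get := List.nodup_iff_injective_get.mp hnd
  set P : List V := C.take (j + 1) with hP
  set Z : List V := C.drop j ++ [u] with hZ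
  have hdne : C.drop j ≠ [] := by
    intro hc
    have := congrArg List.length hc
    rw [List.length_drop] at this
    simp at this
    omega
  have hPlen : P.length = j + 1 := by
    rw [hP, List.length_take]; omega
  -- u ∉ C.drop j
  have hundrop : u ∉ C.drop j := by
    intro hmem
    obtain ⟨q, hq⟩ := List.mem_iff_getElem?.mp hmem
    rw [List.getElem?_drop] at hq
    have h1 : j + q < C.length := (List.getElem?_eq_some_iff.mp hq).1
    have : j + q = 0 := by
      obtain ⟨h1', hget⟩ := List.getElem?_eq_some_iff.mp hq
      have := hinj (a₁ := ⟨j + q, h1'⟩) (a₂ := ⟨0, hult⟩) (by simp only [List.get_eq_getElem]; exact hget.trans huget.symm)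
      simpa using this
    omega
  -- w = first element of drop j
  have hwdrop : (C.drop j).head? = some w := by
    rw [List.head?_drop]
    exact hw
  have hZhead : Z.head? = some w := by
    rw [hZ, ← head?_prefix ⟨[u], rfl⟩ hdne] at *
    exact hwdrop
  have hZlast : Z.getLast? = some u := by rw [hZ]; simp
  have hZcyc : DiCycle A Z := by
    refine ⟨by simp [hZ], ?_, ?_, ?_⟩
    · rw [hZ, chain'_iff_isChain', List.isChain_append]
      refine ⟨hch.suffix (List.drop_suffix _ _), List.isChain_singleton _, ?_⟩
      intro a ha b hb
      simp only [List.head?_cons] at hb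
      obtain rfl : u = b := by injection hb
      apply hcl a u _ hu
      rw [getLast?_suffix (List.drop_suffix j C) hdne] at *
      exact ha
    · rw [hZ, List.nodup_append]
      exact ⟨hnd.sublist (List.drop_sublist _ _), List.nodup_singleton _,
        by intro a ha b hb; simp at hb; subst hb; rintro rfl; exact hundrop ha⟩
    · intro a b hla hhb
      rw [hZlast] at hla
      rw [hZhead] at hhb
      obtain rfl : u = a := by injection hla
      obtain rfl : w = b := by injection hhb
      exact harc
  have hwZ : w ∈ Z := mem_of_head? hZhead
  have huZ : u ∈ Z := mem_of_last? hZlast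
  have hPpath : DiPath A u w P := by
    refine ⟨hch.prefix (List.take_prefix _ _), hnd.sublist (List.take_sublist _ _), ?_, ?_⟩
    · rw [← head?_prefix (List.take_prefix _ _) (by
        intro hc
        have := congrArg List.length hc
        rw [hPlen] at this
        simp at this)]
      exact hu
    · rw [List.getLast?_eq_getElem?, hPlen]
      simp only [Nat.add_sub_cancel]
      rw [hP, List.getElem?_take_of_lt (by omega)]
      exact hw
  refine ⟨Z, P, u, w, hZcyc, huZ, hwZ, hPpath, by omega, ?_⟩
  -- internals of P avoid Z
  intro v hv
  have hvtl : v ∈ P.tail := (internals_subset_s18 _ hv).1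
  have hvdl : v ∈ P.dropLast := (internals_subset_s18 _ hv).2
  -- v = C.get k with 1 ≤ k ≤ j - 1
  have hvP : v ∈ P := List.tail_subset _ hvtl
  obtain ⟨k, hk⟩ := List.mem_iff_getElem?.mp hvP
  have hkj : k < j + 1 := by
    have := (List.getElem?_eq_some_iff.mp hk).1
    omega
  have hkC : C[k]? = some v := by
    rw [hP, List.getElem?_take_of_lt hkj] at hk
    exact hk
  have hkCl : k < C.length := (List.getElem?_eq_some_iff.mp hkC).1
  have hPnd : P.Nodup := hnd.sublist (List.take_sublist _ _)
  have hk0 : k ≠ 0 := by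
    rintro rfl
    have hvu : v = u := by
      rw [hu0] at hkC
      injection hkC with h'
      exact h'.symm
    subst hvu
    exact not_mem_tail_of_head? hPnd hPpath.2.2.1 hvtl
  have hkjne : k ≠ j := by
    rintro rfl
    have hvw : v = w := by
      rw [hw] at hkC
      injection hkC with h'
      exact h'.symm
    subst hvw
    exact not_mem_dropLast_of_last? hPnd hPpath.2.2.2 hvdl
  -- now v ∉ Z
  intro hvZ
  rw [hZ, List.mem_append] at hvZ
  rcases hvZ with h | h
  · obtain ⟨q, hq⟩ := List.mem_iff_getElem?.mp h
    rw [List.getElem?_drop] at hq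
    have h1 : j + q < C.length := (List.getElem?_eq_some_iff.mp hq).1
    have : j + q = k := by
      obtain ⟨h1', hget1⟩ := List.getElem?_eq_some_iff.mp hq
      obtain ⟨h2', hget2⟩ := List.getElem?_eq_some_iff.mp hkC
      have := hinj (a₁ := ⟨j + q, h1'⟩) (a₂ := ⟨k, h2'⟩) (by simp only [List.get_eq_getElem]; exact hget1.trans hget2.symm)
      simpa using this
    omega
  · simp at h
    subst h
    have : (0 : ℕ) = k := by
      obtain ⟨h2', hget2⟩ := List.getElem?_eq_some_iff.mp hkC
      have := hinj (a₁ := ⟨0, hult⟩) (a₂ := ⟨k, h2'⟩) (by simp only [List.get_eq_getElem]; exact huget.trans hget2.symm)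
      simpa using this
    omega

end Chord
section Exit
variable {V : Type u} {A : V → V → Prop}

def Rwalk (A : V → V → Prop) (C : List V) (x m : V) : Prop :=
  x ∈ C ∧ ∃ l : List V, l.Chain' A ∧ l.head? = some x ∧ l.getLast? = some m ∧
    ∀ z ∈ l.tail, z ∉ C

def Wexit (A : V → V → Prop) (C : List V) (m c : V) : Prop :=
  c ∈ C ∧ ∃ l : List V, l.Chain' A ∧ l.head? = some m ∧ l.getLast? = some c ∧
    ∀ z ∈ l.dropLast, z ∉ C

lemma exit_eq {C : List V} (hNE : ¬ HasEar A) (hC : DiCycle A C) {x m c : V}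
    (hm : m ∉ C) (h1 : Rwalk A C x m) (h2 : Wexit A C m c) : c = x := by
  by_contra hcx
  obtain ⟨hxC, l₁, hc₁, hh₁, hl₁, ht₁⟩ := h1
  obtain ⟨hcC, l₂, hc₂, hh₂, hl₂, hd₂⟩ := h2
  obtain ⟨hcc, hhh, hll⟩ := compose_walk hc₁ hc₂ hl₁ hh₂
  rw [hh₁] at hhh
  rw [hl₂] at hll
  obtain ⟨t₁, rfl⟩ := hd_decomp hh₁
  obtain ⟨t₂, hl₂eq⟩ := hd_decomp hh₂
  subst hl₂eq
  -- memberships in l₂: every element is in dropLast or is c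
  have hmem₂ : ∀ v ∈ m :: t₂, v ∈ (m :: t₂).dropLast ∨ v = c := by
    intro v hv
    obtain ⟨s, hs⟩ := last_decomp hl₂
    rw [hs] at hv
    rcases List.mem_append.mp hv with h | h
    · left
      rw [hs, List.dropLast_concat]
      exact h
    · right
      simpa using h
  have hmemt₂ : ∀ v ∈ (m :: t₂).tail, v ∉ C ∨ v = c := by
    intro v hv
    rcases hmem₂ v (List.tail_subset _ hv) with h | h
    · exact Or.inl (hd₂ v h)
    · exact Or.inr h
  apply hNE
  suffices hsurg : ∃ P, DiPath A x c P ∧ 3 ≤ P.length ∧ ∀ v ∈ internals P, v ∉ C by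
    obtain ⟨P, hP, hlen, hint⟩ := hsurg
    exact ⟨C, P, x, c, hC, hxC, hcC, hP, hlen, hint⟩
  refine surgery (l := (x :: t₁) ++ (m :: t₂).tail) hcc hhh hll (Ne.symm hcx) (· ∉ C) ?_
    (not_not.mpr hxC) (not_not.mpr hcC) ?_ ?_ (m := m) ?_ hm
  · intro v hv
    rcases List.mem_append.mp hv with h | h
    · rcases List.mem_cons.mp h with rfl | h
      · exact Or.inl rfl
      · exact Or.inr (Or.inr (ht₁ v h))
    · rcases hmemt₂ v h with h' | h'
      · exact Or.inr (Or.inr h')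
      · exact Or.inr (Or.inl h')
  · -- x not in tail
    rw [show (x :: t₁) ++ (m :: t₂).tail = x :: (t₁ ++ t₂) from rfl, List.tail_cons]
    intro hx
    rcases List.mem_append.mp hx with h | h
    · exact ht₁ x h hxC
    · rcases hmemt₂ x h with h' | h'
      · exact h' hxC
      · exact hcx h'.symm
  · -- c not in dropLast
    intro hcdl
    have ht₂ne : t₂ ≠ [] := by
      rintro rfl
      simp at hl₂
      subst hl₂
      exact hm hcC
    rw [show (x :: t₁) ++ (m :: t₂).tail = (x :: t₁) ++ t₂ from rfl,
        List.dropLast_append_of_ne_nil ht₂ne] at hcdl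
    rcases List.mem_append.mp hcdl with h | h
    · rcases List.mem_cons.mp h with rfl | h
      · exact hcx rfl
      · exact ht₁ c h hcC
    · refine hd₂ c ?_ hcC
      rw [List.dropLast_cons_of_ne_nil ht₂ne]
      exact List.mem_cons_of_mem _ h
  · -- m ∈ list
    apply List.mem_append_left
    exact mem_of_last? hl₁

lemma rwalk_extend {C : List V} {x m m' : V} (h : Rwalk A C x m) (harc : A m m')
    (hm' : m' ∉ C) : Rwalk A C x m' := by
  obtain ⟨hxC, l, hc, hh, hl, ht⟩ := h
  refine ⟨hxC, l ++ [m'], ?_, ?_, by simp, ?_⟩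
  · rw [chain'_iff_isChain', List.isChain_append]
    refine ⟨hc, List.isChain_singleton _, ?_⟩
    intro a ha b hb
    rw [hl] at ha
    simp only [List.head?_cons] at hb
    obtain rfl : m = a := by injection ha
    obtain rfl : m' = b := by injection hb
    exact harc
  · rw [List.head?_append, hh]; rfl
  · obtain ⟨t, rfl⟩ := hd_decomp hh
    rw [show (x :: t) ++ [m'] = x :: (t ++ [m']) from rfl, List.tail_cons]
    intro z hz
    rcases List.mem_append.mp hz with h | h
    · exact ht z h
    · simp at h
      subst h
      exact hm'

lemma rwalk_single {C : List V} {x m : V} (hx : x ∈ C) (harc : A x m) (hm : m ∉ C) :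
    Rwalk A C x m :=
  ⟨hx, [x, m], List.isChain_pair.mpr harc, rfl, rfl, by simpa using hm⟩

lemma wexit_single {C : List V} {m c : V} (hc : c ∈ C) (harc : A m c) (hm : m ∉ C) :
    Wexit A C m c :=
  ⟨hc, [m, c], List.isChain_pair.mpr harc, rfl, rfl, by simpa using hm⟩

lemma exists_rwalk {C : List V} (hS : StrongConn A) (hC : DiCycle A C) {m : V}
    (hm : m ∉ C) : ∃ x, Rwalk A C x m := by
  obtain ⟨c0, hc0⟩ : ∃ c0, c0 ∈ C := by
    cases hcc : C with
    | nil => exact absurd hcc hC.1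
    | cons a t => exact ⟨a, by simp⟩
  obtain ⟨l, hc, hnd, hh, hl⟩ := hS c0 m
  obtain ⟨x, l', h1, h2, h3, h4, h5⟩ :=
    trunc_last (· ∈ C) l.length l le_rfl hc c0 hh hc0
  exact ⟨x, h3, l', h1, h2, by rw [h4]; exact hl, h5⟩

lemma exists_wexit {C : List V} (hS : StrongConn A) (hC : DiCycle A C) {m : V}
    (hm : m ∉ C) : ∃ c, Wexit A C m c := by
  obtain ⟨c0, hc0⟩ : ∃ c0, c0 ∈ C := by
    cases hcc : C with
    | nil => exact absurd hcc hC.1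
    | cons a t => exact ⟨a, by simp⟩
  obtain ⟨l, hc, hnd, hh, hl⟩ := hS m c0
  obtain ⟨c, l', h1, h2, h3, h4, h5⟩ :=
    trunc_first (· ∈ C) hc hh hm ⟨c0, mem_of_last? hl, hc0⟩
  exact ⟨c, h4, l', h1, h2, h3, h5⟩

lemma wexit_unique {C : List V} (hNE : ¬ HasEar A) (hS : StrongConn A) (hC : DiCycle A C)
    {m c c' : V} (hm : m ∉ C) (h1 : Wexit A C m c) (h2 : Wexit A C m c') : c = c' := by
  obtain ⟨x, hx⟩ := exists_rwalk hS hC hm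
  rw [exit_eq hNE hC hm hx h1, exit_eq hNE hC hm hx h2]

lemma wexit_step {C : List V} (hNE : ¬ HasEar A) (hS : StrongConn A) (hC : DiCycle A C)
    {a b : V} (ha : a ∉ C) (hb : b ∉ C) (harc : A a b ∨ A b a) {c : V}
    (hw : Wexit A C a c) : Wexit A C b c := by
  obtain ⟨c', hc'⟩ := exists_wexit hS hC hb
  suffices h : c' = c by rw [← h]; exact hc'
  rcases harc with h | h
  · obtain ⟨x, hx⟩ := exists_rwalk hS hC ha
    have h1 : c = x := exit_eq hNE hC ha hx hw
    have h2 : c' = x := exit_eq hNE hC hb (rwalk_extend hx h hb) hc'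
    rw [h1, h2]
  · obtain ⟨x, hx⟩ := exists_rwalk hS hC hb
    have h2 : c' = x := exit_eq hNE hC hb hx hc'
    have h1 : c = x := exit_eq hNE hC ha (rwalk_extend hx h ha) hw
    rw [h1, h2]

lemma walk_all {C : List V} (hNE : ¬ HasEar A) (hS : StrongConn A) (hC : DiCycle A C)
    (x' : V) : ∀ L : List V, L.Chain' (fun a b => A a b ∨ A b a) →
    (∀ w ∈ L, w ∉ C) → ∀ v0, L.head? = some v0 → Wexit A C v0 x' →
    ∀ w ∈ L, Wexit A C w x' := by
  intro L
  induction L with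
  | nil => intro _ _ v0 h; simp at h
  | cons a t ih =>
    intro hch hmem v0 hh hw w hwmem
    obtain rfl : a = v0 := by injection hh
    rcases List.mem_cons.mp hwmem with rfl | hwt
    · exact hw
    · cases t with
      | nil => simp at hwt
      | cons b t' =>
        have harc : A a b ∨ A b a := (List.isChain_cons_cons.mp hch).1
        have hwb : Wexit A C b x' :=
          wexit_step hNE hS hC (hmem a (by simp)) (hmem b (by simp)) harc hw
        exact ih (List.isChain_cons_cons.mp hch).2
          (fun z hz => hmem z (List.mem_cons_of_mem _ hz)) b rfl hwb w hwt

end Exit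
section Ham
variable {V : Type u} {A : V → V → Prop}

lemma chain_snd_prop {R : V → V → Prop} (Q : V → Prop) (hR : ∀ a b, R a b → Q b) :
    ∀ (L : List V) (a : V), List.Chain R a L → ∀ w ∈ L, Q w := by
  intro L
  induction L with
  | nil => intro a _ w hw; simp at hw
  | cons b L' ih =>
    intro a hch w hw
    rw [show List.Chain R a (b :: L') = List.IsChain R (a :: b :: L') from rfl, List.chain_cons] at hch
    rcases List.mem_cons.mp hw with rfl | hw
    · exact hR a w hch.1
    · exact ih b hch.2 w hw

lemma ham {C : List V} (hNE : ¬ HasEar A) (hS : StrongConn A) (hC : DiCycle A C)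
    (h2 : 2 ≤ C.length)
    (hconn : ∀ x' u w : V, u ≠ x' → w ≠ x' →
      Relation.ReflTransGen (fun a b => (A a b ∨ A b a) ∧ a ≠ x' ∧ b ≠ x') u w) :
    ∀ v, v ∈ C := by
  intro v
  by_contra hv
  obtain ⟨x', hwv⟩ := exists_wexit hS hC hv
  have hx'C : x' ∈ C := hwv.1
  obtain ⟨a, t, hCeq⟩ : ∃ a t, C = a :: t := by
    cases C with
    | nil => exact absurd rfl hC.1
    | cons a t => exact ⟨a, t, rfl⟩
  obtain ⟨b, t', hteq⟩ : ∃ b t', t = b :: t' := by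
    cases t with
    | nil => rw [hCeq] at h2; simp at h2
    | cons b t' => exact ⟨b, t', rfl⟩
  have hab : a ≠ b := by
    have hnd := hC.2.2.1
    rw [hCeq, hteq, List.nodup_cons] at hnd
    intro h
    exact hnd.1 (h ▸ List.mem_cons_self)
  have haC : a ∈ C := by rw [hCeq]; simp
  have hbC : b ∈ C := by rw [hCeq, hteq]; simp
  obtain ⟨c'', hc''C, hc''x⟩ : ∃ c'', c'' ∈ C ∧ c'' ≠ x' := by
    by_cases hax : a = x'
    · exact ⟨b, hbC, fun h => hab (by rw [hax, h])⟩
    · exact ⟨a, haC, hax⟩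
  have hvx' : v ≠ x' := fun h => hv (h ▸ hx'C)
  have hRT := hconn x' v c'' hvx' hc''x
  obtain ⟨L, hchain, hlast⟩ := List.exists_isChain_cons_of_relationReflTransGen hRT
  have hpch : (v :: L).Chain' (fun a b => (A a b ∨ A b a) ∧ a ≠ x' ∧ b ≠ x') := hchain
  have hplast : (v :: L).getLast? = some c'' := by
    rw [List.getLast?_eq_getLast (by simp)]
    exact congrArg some hlast
  have hpsym : (v :: L).Chain' (fun a b => A a b ∨ A b a) := hpch.imp (fun _ _ hstep => hstep.1)
  have hpne : ∀ w ∈ (v :: L), w ≠ x' := by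
    intro w hw
    rcases List.mem_cons.mp hw with rfl | hwL
    · exact hvx'
    · exact chain_snd_prop (· ≠ x') (fun _ _ hstep => hstep.2.2) L v hchain w hwL
  obtain ⟨p1, cs, p2, hpeq, hcsC, hp1⟩ :=
    first_split (· ∈ C) (v :: L) ⟨c'', mem_of_last? hplast, hc''C⟩
  have hp1ne : p1 ≠ [] := by
    rintro rfl
    simp only [List.nil_append] at hpeq
    injection hpeq with h1 h2
    subst h1
    exact hv hcsC
  have hmlast : p1.getLast? = some (p1.getLast hp1ne) := List.getLast?_eq_getLast _
  set ms := p1.getLast hp1ne with hms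
  have hmsp1 : ms ∈ p1 := mem_of_last? hmlast
  have hmsC : ms ∉ C := hp1 ms hmsp1
  have hp1pre : p1 <+: (v :: L) := ⟨cs :: p2, hpeq.symm⟩
  have hp1h : p1.head? = some v := by
    rw [← head?_prefix hp1pre hp1ne]; rfl
  have hWall := walk_all hNE hS hC x' p1 (hpsym.prefix hp1pre) hp1 v hp1h hwv
  have hWms : Wexit A C ms x' := hWall ms hmsp1
  have harc : A ms cs ∨ A cs ms := by
    have hch2 := hpeq ▸ hpsym
    have := (List.isChain_append.mp hch2).2.2 ms hmlast cs rfl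
    exact this
  have hcsx : cs ≠ x' := hpne cs (by rw [hpeq]; simp)
  rcases harc with h | h
  · have hw2 : Wexit A C ms cs := wexit_single hcsC h hmsC
    exact hcsx (wexit_unique hNE hS hC hmsC hw2 hWms)
  · have hr2 : Rwalk A C cs ms := rwalk_single hcsC h hmsC
    exact hcsx (exit_eq hNE hC hmsC hr2 hWms).symm

lemma get?_indexOf [DecidableEq V] {l : List V} {a : V} (h : a ∈ l) :
    l[List.idxOf a l]? = some a := by
  have hlt := List.idxOf_lt_length_iff.mpr h
  rw [List.getElem?_eq_getElem hlt]
  exact congrArg some (by exact List.getElem_idxOf hlt)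

lemma terminal (hNE : ¬ HasEar A) (hS : StrongConn A)
    (hconn : ∀ x' u w : V, u ≠ x' → w ≠ x' →
      Relation.ReflTransGen (fun a b => (A a b ∨ A b a) ∧ a ≠ x' ∧ b ≠ x') u w)
    (hex : ∃ u v : V, u ≠ v) :
    ∃ f : V → Fin 3, ∀ u w, A u w → u ≠ w → f u ≠ f w := by
  classical
  obtain ⟨u0, v0, huv⟩ := hex
  obtain ⟨l, hlc, hlnd, hlh, hll⟩ := hS u0 v0
  obtain ⟨t, rfl⟩ := hd_decomp hlh
  obtain ⟨b0, t', rfl⟩ : ∃ b0 t'', t = b0 :: t'' := by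
    cases t with
    | nil => simp at hll; exact absurd hll huv
    | cons b t'' => exact ⟨b, t'', rfl⟩
  have harc0 : A u0 b0 := (List.isChain_cons_cons.mp hlc).1
  have hub : u0 ≠ b0 := by
    rw [List.nodup_cons] at hlnd
    intro h
    exact hlnd.1 (h ▸ List.mem_cons_self)
  obtain ⟨C, hc2, hnd2, hh2, hl2⟩ := hS b0 u0
  have hCcyc : DiCycle A C := by
    refine ⟨fun h => by simp [h] at hh2, hc2, hnd2, ?_⟩
    intro a b hla hhb
    rw [hl2] at hla
    rw [hh2] at hhb
    obtain rfl : u0 = a := by injection hla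
    obtain rfl : b0 = b := by injection hhb
    exact harc0
  have hCpos : 0 < C.length := List.length_pos_iff.mpr hCcyc.1
  have hlen2 : 2 ≤ C.length := by
    by_contra hlt
    have h1 : C.length = 1 := by omega
    obtain ⟨z, hz⟩ := List.length_eq_one_iff.mp h1
    rw [hz] at hh2 hl2
    simp at hh2 hl2
    exact hub (hl2.symm.trans hh2).symm.symm
  have hall : ∀ v, v ∈ C := ham hNE hS hCcyc hlen2 hconn
  have hnd := hCcyc.2.2.1
  have hneC := hCcyc.1
  set n := C.length with hn
  have hcarc : ∀ u w, A u w → u ≠ w → cycArc C u w := by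
    intro u w harc hne
    by_contra hnc
    have hi : List.idxOf u C < C.length := List.idxOf_lt_length_iff.mpr (hall u)
    set K := C.rotate (List.idxOf u C) with hK
    have hKcyc : DiCycle A K := dicycle_rotate hCcyc _
    have hKne : K ≠ [] := rotate_ne_nil hneC _
    have hKlen : K.length = C.length := List.length_rotate _ _
    have hKu : K[0]? = some u := by
      rw [hK, get?_rotate (by omega), Nat.zero_add, Nat.mod_eq_of_lt hi]
      exact get?_indexOf (hall u)
    have hKuh : K.head? = some u := by rw [head?_eq_get?]; exact hKu
    have hwK : w ∈ K := List.mem_rotate.mpr (hall w)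
    have hj : List.idxOf w K < K.length := List.idxOf_lt_length_iff.mpr hwK
    have hKw : K[List.idxOf w K]? = some w := get?_indexOf hwK
    have hj0 : List.idxOf w K ≠ 0 := by
      intro h
      rw [h, hKu] at hKw
      injection hKw with h'
      exact hne h'
    by_cases hj1 : List.idxOf w K = 1
    · apply hnc
      apply cycArc_rotate hneC (k := List.idxOf u C)
      rw [cycArc_iff hKne]
      refine ⟨0, by omega, hKu, ?_⟩
      rw [Nat.zero_add, Nat.mod_eq_of_lt (by omega), ← hj1]
      exact hKw
    · exact hNE (chord0 hKcyc hj (by omega) hKuh hKw harc)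
  refine ⟨fun v => ⟨if List.idxOf v C = n - 1 then 2 else List.idxOf v C % 2,
    by split <;> omega⟩, ?_⟩
  intro u w harc hne
  have hca := hcarc u w harc hne
  rw [cycArc_iff hneC] at hca
  obtain ⟨i, hi, ha, hb⟩ := hca
  have hidxu : List.idxOf u C = i :=
    (List.getElem?_inj (List.idxOf_lt_length_iff.mpr (hall u)) hnd).mp
      ((get?_indexOf (hall u)).trans ha.symm)
  have hidxw : List.idxOf w C = (i + 1) % n :=
    (List.getElem?_inj (List.idxOf_lt_length_iff.mpr (hall w)) hnd).mp
      ((get?_indexOf (hall w)).trans hb.symm)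
  intro hEq
  rw [Fin.mk.injEq, hidxu, hidxw] at hEq
  rcases Nat.lt_or_ge (i + 1) n with hlt | hge
  · rw [Nat.mod_eq_of_lt hlt] at hEq
    split_ifs at hEq <;> omega
  · have hieq : i + 1 = n := by omega
    rw [hieq, Nat.mod_self] at hEq
    split_ifs at hEq <;> omega

end Ham
section Lift
variable {V : Type u} {A : V → V → Prop} {p : V → Prop}

lemma internals_map {W : Type u} (f : V → W) (l : List V) :
    internals (l.map f) = (internals l).map f := by
  unfold internals
  rw [← List.map_tail, List.map_dropLast]

lemma dipath_map {x y : {v // p v}} {l : List {v // p v}}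
    (h : DiPath (fun a b => A a.1 b.1) x y l) :
    DiPath A x.1 y.1 (l.map Subtype.val) := by
  obtain ⟨hc, hnd, hh, hl⟩ := h
  refine ⟨(List.isChain_map _).mpr hc, hnd.map Subtype.val_injective, ?_, ?_⟩
  · rw [List.head?_map, hh]; rfl
  · rw [List.getLast?_map, hl]; rfl

lemma dicycle_map {l : List {v // p v}}
    (h : DiCycle (fun a b => A a.1 b.1) l) :
    DiCycle A (l.map Subtype.val) := by
  obtain ⟨hne, hc, hnd, hcl⟩ := h
  refine ⟨fun hnil => hne (List.map_eq_nil_iff.mp hnil), (List.isChain_map _).mpr hc,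
    hnd.map Subtype.val_injective, ?_⟩
  intro a b hla hhb
  rw [List.getLast?_map] at hla
  rw [List.head?_map] at hhb
  cases h1 : l.getLast? with
  | none => rw [h1] at hla; simp at hla
  | some a' =>
    cases h2 : l.head? with
    | none => rw [h2] at hhb; simp at hhb
    | some b' =>
      rw [h1] at hla
      rw [h2] at hhb
      simp at hla hhb
      rw [← hla, ← hhb]
      exact hcl a' b' h1 h2

lemma hasEar_lift (h : HasEar (fun a b : {v // p v} => A a.1 b.1)) : HasEar A := by
  obtain ⟨C, P, x, y, hC, hxC, hyC, hP, hlen, hint⟩ := h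
  refine ⟨C.map Subtype.val, P.map Subtype.val, x.1, y.1, dicycle_map hC,
    List.mem_map_of_mem hxC, List.mem_map_of_mem hyC, dipath_map hP,
    by rw [List.length_map]; exact hlen, ?_⟩
  intro v hv hvC
  rw [internals_map] at hv
  obtain ⟨v', hv', rfl⟩ := List.mem_map.mp hv
  obtain ⟨c', hc', hcv⟩ := List.mem_map.mp hvC
  have : c' = v' := Subtype.val_injective hcv
  exact hint v' hv' (this ▸ hc')

end Lift

section Cross
variable {V : Type u} {A : V → V → Prop} {x : V} {V1 V2 : Set V}

lemma cross1 (hnoarc : ∀ a b, A a b → ¬(a ∈ V1 ∧ b ∈ V2) ∧ ¬(a ∈ V2 ∧ b ∈ V1))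
    (hpart : ∀ v, v = x ∨ v ∈ V1 ∨ v ∈ V2) (hdisj : ∀ v, ¬(v ∈ V1 ∧ v ∈ V2))
    (h2x : x ∉ V2) :
    ∀ l : List V, l.Chain' A → ∀ h, l.head? = some h → (h = x ∨ h ∈ V1) →
      ∀ g, l.getLast? = some g → g ∈ V2 → x ∈ l.dropLast := by
  intro l
  induction l with
  | nil => intro _ h hh; simp at hh
  | cons a t ih =>
    intro hc h hh hhS g hg hgV2
    obtain rfl : a = h := by injection hh
    cases t with
    | nil =>
      simp at hg
      subst hg
      rcases hhS with rfl | h1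
      · exact absurd hgV2 h2x
      · exact absurd ⟨h1, hgV2⟩ (hdisj _)
    | cons b t' =>
      rcases hhS with rfl | h1
      · rw [List.dropLast_cons₂]; simp
      · have harc : A a b := (List.isChain_cons_cons.mp hc).1
        have hbS : b = x ∨ b ∈ V1 := by
          rcases hpart b with hb | hb | hb
          · exact Or.inl hb
          · exact Or.inr hb
          · exact absurd ⟨h1, hb⟩ (hnoarc a b harc).1
        rw [List.getLast?_cons_cons] at hg
        have := ih (List.isChain_cons_cons.mp hc).2 b rfl hbS g hg hgV2
        rw [List.dropLast_cons₂]
        exact List.mem_cons_of_mem _ this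

lemma cross2 (hnoarc : ∀ a b, A a b → ¬(a ∈ V1 ∧ b ∈ V2) ∧ ¬(a ∈ V2 ∧ b ∈ V1))
    (hpart : ∀ v, v = x ∨ v ∈ V1 ∨ v ∈ V2) (hdisj : ∀ v, ¬(v ∈ V1 ∧ v ∈ V2))
    (h2x : x ∉ V2) :
    ∀ l : List V, l.Chain' A → ∀ h, l.head? = some h → h ∈ V2 →
      ∀ g, l.getLast? = some g → (g = x ∨ g ∈ V1) → x ∈ l.tail := by
  intro l
  induction l with
  | nil => intro _ h hh; simp at hh
  | cons a t ih =>
    intro hc h hh hhV2 g hg hgS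
    obtain rfl : a = h := by injection hh
    cases t with
    | nil =>
      simp at hg
      subst hg
      rcases hgS with rfl | h1
      · exact absurd hhV2 h2x
      · exact absurd ⟨h1, hhV2⟩ (hdisj _)
    | cons b t' =>
      have harc : A a b := (List.isChain_cons_cons.mp hc).1
      have hbS : b = x ∨ b ∈ V2 := by
        rcases hpart b with hb | hb | hb
        · exact Or.inl hb
        · exact absurd ⟨hhV2, hb⟩ (hnoarc a b harc).2
        · exact Or.inr hb
      rcases hbS with rfl | hbV2
      · simp
      · rw [List.getLast?_cons_cons] at hg
        have := ih (List.isChain_cons_cons.mp hc).2 b rfl hbV2 g hg hgS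
        exact List.mem_cons_of_mem _ this

lemma path_stay (hnoarc : ∀ a b, A a b → ¬(a ∈ V1 ∧ b ∈ V2) ∧ ¬(a ∈ V2 ∧ b ∈ V1))
    (hpart : ∀ v, v = x ∨ v ∈ V1 ∨ v ∈ V2) (hdisj : ∀ v, ¬(v ∈ V1 ∧ v ∈ V2))
    (h2x : x ∉ V2) {l : List V} (hc : l.Chain' A) (hnd : l.Nodup)
    {hv gv : V} (hh : l.head? = some hv) (hhS : hv = x ∨ hv ∈ V1)
    (hg : l.getLast? = some gv) (hgS : gv = x ∨ gv ∈ V1) :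
    ∀ w ∈ l, w = x ∨ w ∈ V1 := by
  intro w hw
  rcases hpart w with h | h | h
  · exact Or.inl h
  · exact Or.inr h
  · exfalso
    obtain ⟨la, lb, rfl⟩ := List.append_of_mem hw
    have hpre : (la ++ [w]) <+: (la ++ w :: lb) := ⟨lb, by simp⟩
    have hsuf : (w :: lb) <:+ (la ++ w :: lb) := ⟨la, rfl⟩
    have hx1 : x ∈ la := by
      have h1 := cross1 hnoarc hpart hdisj h2x (la ++ [w]) (hc.prefix hpre) hv
        (by rw [← head?_prefix hpre (by simp)]; exact hh) hhS w (by simp) h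
      rw [List.dropLast_concat] at h1
      exact h1
    have hx2 : x ∈ lb := by
      have h2 := cross2 hnoarc hpart hdisj h2x (w :: lb) (hc.suffix hsuf) w rfl h gv
        (by rw [← getLast?_suffix hsuf (by simp)]; exact hg) hgS
      simpa using h2
    have hdisj2 := List.disjoint_of_nodup_append hnd
    exact hdisj2 hx1 (List.mem_cons_of_mem _ hx2)

lemma strong_restrict (hS : StrongConn A)
    (hpart : ∀ v, v = x ∨ v ∈ V1 ∨ v ∈ V2) (h1x : x ∉ V1) (h2x : x ∉ V2)
    (hdisj : ∀ v, ¬(v ∈ V1 ∧ v ∈ V2))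
    (hnoarc : ∀ a b, A a b → ¬(a ∈ V1 ∧ b ∈ V2) ∧ ¬(a ∈ V2 ∧ b ∈ V1)) :
    StrongConn (fun a b : {v // v = x ∨ v ∈ V1} => A a.1 b.1) := by
  intro u w
  obtain ⟨l, hc, hnd, hh, hl⟩ := hS u.1 w.1
  have hall : ∀ z ∈ l, z = x ∨ z ∈ V1 :=
    path_stay hnoarc hpart hdisj h2x hc hnd hh u.2 hl w.2
  set L := l.pmap (fun a ha => (⟨a, ha⟩ : {v // v = x ∨ v ∈ V1})) hall with hL
  have hmv : L.map Subtype.val = l := by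
    rw [hL, List.map_pmap]
    rw [List.pmap_eq_map]
    exact List.map_id l
  refine ⟨L, ?_, ?_, ?_, ?_⟩
  · exact (List.isChain_map _).mp (by rw [hmv]; exact hc)
  · exact List.Nodup.of_map Subtype.val (by rw [hmv]; exact hnd)
  · have h1 : (L.map Subtype.val).head? = some u.1 := by rw [hmv]; exact hh
    rw [List.head?_map] at h1
    cases hL2 : L.head? with
    | none => rw [hL2] at h1; simp at h1
    | some z =>
      rw [hL2] at h1
      simp at h1
      exact congrArg some (Subtype.ext h1)
  · have h1 : (L.map Subtype.val).getLast? = some w.1 := by rw [hmv]; exact hl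
    rw [List.getLast?_map] at h1
    cases hL2 : L.getLast? with
    | none => rw [hL2] at h1; simp at h1
    | some z =>
      rw [hL2] at h1
      simp at h1
      exact congrArg some (Subtype.ext h1)

end Cross
section Main
lemma main3 : ∀ (n : ℕ) (V : Type u) [Fintype V] (A : V → V → Prop),
    Fintype.card V = n → StrongConn A → ¬ HasEar A →
    ∃ f : V → Fin 3, ∀ u w, A u w → u ≠ w → f u ≠ f w := by
  intro n
  induction n using Nat.strong_induction_on with
  | _ n ih =>
    intro V _ A hcard hS hNE
    classical
    by_cases hcut : ∃ (x : V) (V1 V2 : Set V), V1.Nonempty ∧ V2.Nonempty ∧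
        (∀ v, v = x ∨ v ∈ V1 ∨ v ∈ V2) ∧ x ∉ V1 ∧ x ∉ V2 ∧
        (∀ v, ¬(v ∈ V1 ∧ v ∈ V2)) ∧
        (∀ a b, A a b → ¬(a ∈ V1 ∧ b ∈ V2) ∧ ¬(a ∈ V2 ∧ b ∈ V1))
    · obtain ⟨x, V1, V2, ⟨w1, hw1⟩, ⟨w2, hw2⟩, hpart, h1x, h2x, hdisj, hnoarc⟩ := hcut
      have hpart' : ∀ v, v = x ∨ v ∈ V2 ∨ v ∈ V1 := fun v => (hpart v).imp id Or.symm
      have hdisj' : ∀ v, ¬(v ∈ V2 ∧ v ∈ V1) := fun v h => hdisj v ⟨h.2, h.1⟩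
      have hnoarc' : ∀ a b, A a b → ¬(a ∈ V2 ∧ b ∈ V1) ∧ ¬(a ∈ V1 ∧ b ∈ V2) :=
        fun a b h => ⟨(hnoarc a b h).2, (hnoarc a b h).1⟩
      have hS1 : StrongConn (fun a b : {v // v = x ∨ v ∈ V1} => A a.1 b.1) :=
        strong_restrict hS hpart h1x h2x hdisj hnoarc
      have hS2 : StrongConn (fun a b : {v // v = x ∨ v ∈ V2} => A a.1 b.1) :=
        strong_restrict hS hpart' h2x h1x hdisj' hnoarc'
      have hNE1 : ¬ HasEar (fun a b : {v // v = x ∨ v ∈ V1} => A a.1 b.1) :=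
        fun h => hNE (hasEar_lift h)
      have hNE2 : ¬ HasEar (fun a b : {v // v = x ∨ v ∈ V2} => A a.1 b.1) :=
        fun h => hNE (hasEar_lift h)
      have hc1 : Fintype.card {v // v = x ∨ v ∈ V1} < n := by
        rw [← hcard]
        refine Fintype.card_subtype_lt (x := w2) ?_
        rintro (rfl | hmem)
        · exact h2x hw2
        · exact hdisj _ ⟨hmem, hw2⟩
      have hc2 : Fintype.card {v // v = x ∨ v ∈ V2} < n := by
        rw [← hcard]
        refine Fintype.card_subtype_lt (x := w1) ?_
        rintro (rfl | hmem)
        · exact h1x hw1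
        · exact hdisj _ ⟨hw1, hmem⟩
      obtain ⟨f1, hf1⟩ := ih _ hc1 {v // v = x ∨ v ∈ V1} _ rfl hS1 hNE1
      obtain ⟨f2, hf2⟩ := ih _ hc2 {v // v = x ∨ v ∈ V2} _ rfl hS2 hNE2
      set x1 : {v // v = x ∨ v ∈ V1} := ⟨x, Or.inl rfl⟩ with hx1
      set x2 : {v // v = x ∨ v ∈ V2} := ⟨x, Or.inl rfl⟩ with hx2
      set g2 : {v // v = x ∨ v ∈ V2} → Fin 3 :=
        fun v => (Equiv.swap (f2 x2) (f1 x1)) (f2 v) with hg2def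
      have hg2 : ∀ u w, A u.1 w.1 → u ≠ w → g2 u ≠ g2 w :=
        fun u w ha hne heq => hf2 u w ha hne (Equiv.injective _ heq)
      have hg2x : g2 x2 = f1 x1 := by
        rw [hg2def]
        exact Equiv.swap_apply_left _ _
      have hmem2 : ∀ v : V, ¬(v = x ∨ v ∈ V1) → (v = x ∨ v ∈ V2) := by
        intro v h
        rcases hpart v with h' | h' | h'
        · exact Or.inl h'
        · exact absurd (Or.inr h') h
        · exact Or.inr h'
      refine ⟨fun v => if h : v = x ∨ v ∈ V1 then f1 ⟨v, h⟩ else g2 ⟨v, hmem2 v h⟩, ?_⟩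
      intro u w harc hne
      dsimp only
      by_cases hu : u = x ∨ u ∈ V1 <;> by_cases hw : w = x ∨ w ∈ V1
      · rw [dif_pos hu, dif_pos hw]
        exact hf1 ⟨u, hu⟩ ⟨w, hw⟩ harc (fun h => hne (congrArg Subtype.val h))
      · rw [dif_pos hu, dif_neg hw]
        have hwV2 : w ∈ V2 := by
          rcases hmem2 w hw with h' | h'
          · exact absurd (Or.inl h') hw
          · exact h'
        have hux : u = x := by
          rcases hu with h' | h'
          · exact h'
          · exact absurd ⟨h', hwV2⟩ (hnoarc u w harc).1
        subst hux
        have e1 : (⟨u, hu⟩ : {v // v = u ∨ v ∈ V1}) = x1 := rfl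
        rw [e1, ← hg2x]
        apply hg2 x2 ⟨w, hmem2 w hw⟩ harc
        intro hcon
        exact hne (congrArg Subtype.val hcon)
      · rw [dif_neg hu, dif_pos hw]
        have huV2 : u ∈ V2 := by
          rcases hmem2 u hu with h' | h'
          · exact absurd (Or.inl h') hu
          · exact h'
        have hwx : w = x := by
          rcases hw with h' | h'
          · exact h'
          · exact absurd ⟨huV2, h'⟩ (hnoarc u w harc).2
        subst hwx
        have e1 : (⟨w, hw⟩ : {v // v = w ∨ v ∈ V1}) = x1 := rfl
        rw [e1, ← hg2x]
        apply hg2 ⟨u, hmem2 u hu⟩ x2 harc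
        intro hcon
        exact hne (congrArg Subtype.val hcon)
      · rw [dif_neg hu, dif_neg hw]
        exact hg2 ⟨u, hmem2 u hu⟩ ⟨w, hmem2 w hw⟩ harc
          (fun h => hne (congrArg Subtype.val h))
    · by_cases htriv : ∃ u v : V, u ≠ v
      · have hconn : ∀ x' u w : V, u ≠ x' → w ≠ x' →
            Relation.ReflTransGen (fun a b => (A a b ∨ A b a) ∧ a ≠ x' ∧ b ≠ x') u w := by
          intro x' u w hu hw
          by_contra hno
          apply hcut
          refine ⟨x', {z | z ≠ x' ∧ Relation.ReflTransGen
              (fun a b => (A a b ∨ A b a) ∧ a ≠ x' ∧ b ≠ x') u z},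
            {z | z ≠ x' ∧ ¬ Relation.ReflTransGen
              (fun a b => (A a b ∨ A b a) ∧ a ≠ x' ∧ b ≠ x') u z},
            ⟨u, hu, Relation.ReflTransGen.refl⟩, ⟨w, hw, hno⟩, ?_, ?_, ?_, ?_, ?_⟩
          · intro v
            by_cases hvx : v = x'
            · exact Or.inl hvx
            · by_cases hvr : Relation.ReflTransGen
                  (fun a b => (A a b ∨ A b a) ∧ a ≠ x' ∧ b ≠ x') u v
              · exact Or.inr (Or.inl ⟨hvx, hvr⟩)
              · exact Or.inr (Or.inr ⟨hvx, hvr⟩)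
          · rintro ⟨h, -⟩; exact h rfl
          · rintro ⟨h, -⟩; exact h rfl
          · rintro v ⟨⟨-, h1⟩, ⟨-, h2⟩⟩; exact h2 h1
          · rintro a b harc
            constructor
            · rintro ⟨⟨ha1, ha2⟩, ⟨hb1, hb2⟩⟩
              exact hb2 (ha2.tail ⟨Or.inl harc, ha1, hb1⟩)
            · rintro ⟨⟨ha1, ha2⟩, ⟨hb1, hb2⟩⟩
              exact ha2 (hb2.tail ⟨Or.inr harc, hb1, ha1⟩)
        exact terminal hNE hS hconn htriv
      · push_neg at htriv
        exact ⟨fun _ => 0, fun u w _ hne => absurd (htriv u w) hne⟩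
end Main
/-- Every strong digraph with chromatic number at least 4 contains a directed cycle
`C` together with a directed ear of length at least 2: a dipath between two vertices
of `C` whose internal vertices avoid `C`. -/
theorem stmt18 {V : Type u} [Fintype V] (A : V → V → Prop)
    (hstrong : StrongConn A) (hchi : (4 : ℕ∞) ≤ dchrom A) :
    ∃ (C P : List V) (x y : V), DiCycle A C ∧ x ∈ C ∧ y ∈ C ∧ DiPath A x y P ∧
      3 ≤ P.length ∧ ∀ v ∈ internals P, v ∉ C := by
  by_contra hNE
  have hNE' : ¬ HasEar A := hNE
  obtain ⟨f, hf⟩ := main3 (Fintype.card V) V A rfl hstrong hNE'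
  have hcol : (SimpleGraph.fromRel A).Colorable 3 := by
    refine ⟨SimpleGraph.Coloring.mk f ?_⟩
    intro v w hadj
    rw [SimpleGraph.fromRel_adj] at hadj
    obtain ⟨hne, h | h⟩ := hadj
    · exact hf v w h hne
    · exact (hf w v h hne.symm).symm.symm.symm
  have hle := hcol.chromaticNumber_le
  unfold dchrom at hchi
  have hcontra : (4 : ℕ∞) ≤ (3 : ℕ) := le_trans hchi hle
  norm_num at hcontra
end
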